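/- arXiv:2009.10685 — 5 statements merged into one kernel-verified Lean document; each statement's English description precedes it below -/
import Mathlib

section
/- Let X = (X_1, …, X_k) be a centered multivariate Gaussian vector in ℝ^k with positive definite covariance matrix Ω. For i ∈ [k], write X_{ī} for the vector X with the i-th coordinate removed, Ω_{j j̄} for the j-th row of Ω with entry j removed, and Ω_{j̄ j̄} for Ω with the j-th row and column removed. Let f : ℝ^k → ℝ be differentiable with f and all its partial derivatives polynomially bounded. Then for every i ∈ [k], E[X_i f(X)] = ∑_{j=1}^k a_j Ω_{j i}, where a_j := E[(X_j − Ω_{j j̄} Ω_{j̄ j̄}⁻¹ X_{j̄}) f(X)] / (Ω_{jj} − Ω_{j j̄} Ω_{j̄ j̄}⁻¹ Ω_{j̄ j}); in particular the coefficients a_j do not depend on i. -/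
open MeasureTheory ProbabilityTheory Matrix

/-- A measure `μ` on `ℝ^k` is a centered Gaussian with covariance matrix `Λ` iff every
linear functional pushes it forward to a one-dimensional centered Gaussian with the
corresponding variance. -/
def IsGaussianVec {k : ℕ} (μ : Measure (Fin k → ℝ)) (Λ : Matrix (Fin k) (Fin k) ℝ) : Prop :=
  ∀ a : Fin k → ℝ,
    Measure.map (fun x => ∑ i, a i * x i) μ =
      gaussianReal 0 (Real.toNNReal (∑ i, ∑ j, a i * Λ i j * a j))

/-- Schur-complement style identity: the residual `x j - Ω_{j j̄} Ω_{j̄ j̄}⁻¹ x_{j̄}` equals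
`σ_j² ⋅ (Ω⁻¹ x)_j` pointwise, where `σ_j²` is the (positive) conditional variance. -/
lemma schur_key {k : ℕ} (Ω : Matrix (Fin (k + 1)) (Fin (k + 1)) ℝ) (hΩ : Ω.PosDef)
    (j : Fin (k + 1)) :
    0 < Ω j j - (fun l => Ω j (j.succAbove l)) ⬝ᵥ
        ((Ω.submatrix j.succAbove j.succAbove)⁻¹).mulVec (fun l => Ω (j.succAbove l) j) ∧
    ∀ x : Fin (k + 1) → ℝ,
      x j - (fun l => Ω j (j.succAbove l)) ⬝ᵥ
          ((Ω.submatrix j.succAbove j.succAbove)⁻¹).mulVec (fun l => x (j.succAbove l)) =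
      (Ω j j - (fun l => Ω j (j.succAbove l)) ⬝ᵥ
          ((Ω.submatrix j.succAbove j.succAbove)⁻¹).mulVec (fun l => Ω (j.succAbove l) j)) *
        ∑ t, Ω⁻¹ j t * x t := by
  have hsymm : ∀ a b, Ω a b = Ω b a := by
    intro a b
    have := congrFun (congrFun hΩ.1 a) b
    simpa using this.symm
  set S := Ω.submatrix j.succAbove j.succAbove with hS
  set b : Fin k → ℝ := fun l => Ω j (j.succAbove l) with hb
  have hb' : (fun l => Ω (j.succAbove l) j) = b := funext fun l => hsymm _ _
  -- S is positive definite
  have hSpd : S.PosDef := by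
    refine PosDef.of_dotProduct_mulVec_pos (hΩ.1.submatrix _) fun x hx => ?_
    set y : Fin (k + 1) → ℝ := j.insertNth 0 x with hy
    have hyj : y j = 0 := by rw [hy]; exact Fin.insertNth_apply_same (α := fun _ => ℝ) j 0 x
    have hys : ∀ m, y (j.succAbove m) = x m := by
      intro m; rw [hy]; exact Fin.insertNth_apply_succAbove (α := fun _ => ℝ) j 0 x m
    have hy0 : y ≠ 0 := by
      intro h
      apply hx
      funext m
      have := congrFun h (j.succAbove m)
      simpa [hys m] using this
    have hpos := hΩ.dotProduct_mulVec_pos hy0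
    have hEq : star x ⬝ᵥ S.mulVec x = star y ⬝ᵥ Ω.mulVec y := by
      simp only [dotProduct, mulVec, star_trivial]
      rw [Fin.sum_univ_succAbove (fun t => y t * ∑ s, Ω t s * y s) j]
      simp only [hyj, zero_mul, zero_add]
      refine Finset.sum_congr rfl fun l _ => ?_
      rw [hys l]
      congr 1
      rw [Fin.sum_univ_succAbove (fun s => Ω (j.succAbove l) s * y s) j]
      simp only [hyj, mul_zero, zero_add]
      refine Finset.sum_congr rfl fun m _ => ?_
      rw [hys m, hS, submatrix_apply]
    rw [hEq]
    exact hpos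
  have hΩdet : IsUnit Ω.det := isUnit_iff_ne_zero.mpr hΩ.det_pos.ne'
  have hSdet : IsUnit S.det := isUnit_iff_ne_zero.mpr hSpd.det_pos.ne'
  have hΩt : Ωᵀ = Ω := hΩ.1
  have hSt : Sᵀ = S := hSpd.1
  -- the key vector
  set v : Fin (k + 1) → ℝ := fun t => Pi.single (M := fun _ => ℝ) j (1 : ℝ) t -
      Fin.insertNth (α := fun _ => ℝ) j 0 (S⁻¹.mulVec b) t
    with hv
  have hvj : v j = 1 := by simp [hv, Fin.insertNth_apply_same]
  have hvs : ∀ m, v (j.succAbove m) = -(S⁻¹.mulVec b) m := by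
    intro m
    simp [hv, Fin.insertNth_apply_succAbove, Pi.single_eq_of_ne (Fin.succAbove_ne j m)]
  set σ : ℝ := Ω j j - b ⬝ᵥ S⁻¹.mulVec b with hσ
  -- Ω v = σ e_j
  have hΩv : Ω.mulVec v = fun t => σ * Pi.single (M := fun _ => ℝ) j (1 : ℝ) t := by
    funext i
    have hrow : Ω.mulVec v i = Ω i j - ∑ m, Ω i (j.succAbove m) * S⁻¹.mulVec b m := by
      simp only [mulVec, dotProduct]
      rw [Fin.sum_univ_succAbove (fun t => Ω i t * v t) j, hvj, mul_one]
      rw [sub_eq_add_neg, ← Finset.sum_neg_distrib]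
      congr 1
      refine Finset.sum_congr rfl fun m _ => ?_
      rw [hvs m]
      simp only [mulVec, dotProduct]
      ring
    by_cases hij : i = j
    · subst hij
      rw [hrow]
      have h2 : ∑ m, Ω i (i.succAbove m) * S⁻¹.mulVec b m = b ⬝ᵥ S⁻¹.mulVec b := rfl
      rw [h2]
      simp [hσ]
    · obtain ⟨t, rfl⟩ := Fin.exists_succAbove_eq (Ne.symm (Ne.symm hij))
      rw [hrow]
      have h1 : ∑ m, Ω (j.succAbove t) (j.succAbove m) * S⁻¹.mulVec b m
          = (S * S⁻¹).mulVec b t := by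
        rw [← mulVec_mulVec]
        simp only [mulVec, dotProduct, hS, submatrix_apply]
      rw [h1, mul_nonsing_inv _ hSdet, one_mulVec]
      have : Ω (j.succAbove t) j = b t := by rw [hsymm]
      rw [this, sub_self]
      rw [Pi.single_eq_of_ne (Fin.succAbove_ne j t), mul_zero]
  -- v = σ • row j of Ω⁻¹
  have hinvsymm : ∀ a c, Ω⁻¹ a c = Ω⁻¹ c a := by
    intro a c
    have h3 : Ω⁻¹ᵀ = Ω⁻¹ := by rw [transpose_nonsing_inv, hΩt]
    nth_rewrite 1 [← h3]
    rw [transpose_apply]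
  have hveq : v = fun t => σ * Ω⁻¹ j t := by
    have h1 : Ω⁻¹.mulVec (Ω.mulVec v) = v := by
      rw [mulVec_mulVec, nonsing_inv_mul _ hΩdet, one_mulVec]
    rw [hΩv] at h1
    rw [← h1]
    funext t
    simp only [mulVec, dotProduct]
    rw [Finset.sum_eq_single j]
    · rw [Pi.single_eq_same, hinvsymm]; ring
    · intro c _ hc
      rw [Pi.single_eq_of_ne hc, mul_zero, mul_zero]
    · intro h; exact absurd (Finset.mem_univ j) h
  -- positivity of σ
  have hv0 : v ≠ 0 := by
    intro h
    have := congrFun h j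
    rw [hvj] at this
    simpa using this
  have hσpos : 0 < σ := by
    have hpos := hΩ.dotProduct_mulVec_pos hv0
    have : star v ⬝ᵥ Ω.mulVec v = σ := by
      rw [hΩv]
      simp only [star_trivial, dotProduct]
      rw [Finset.sum_eq_single j]
      · rw [Pi.single_eq_same, hvj]; ring
      · intro c _ hc
        rw [Pi.single_eq_of_ne hc]; ring
      · intro h; exact absurd (Finset.mem_univ j) h
    rwa [this] at hpos
  rw [hb']
  refine ⟨hσpos, fun x => ?_⟩
  have hlhs : x j - b ⬝ᵥ S⁻¹.mulVec (fun l => x (j.succAbove l)) = v ⬝ᵥ x := by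
    have hBS : b ᵥ* S⁻¹ = S⁻¹.mulVec b := by
      rw [← mulVec_transpose, transpose_nonsing_inv, hSt]
    rw [dotProduct_mulVec, hBS]
    simp only [dotProduct]
    rw [Fin.sum_univ_succAbove (fun t => v t * x t) j, hvj, one_mul]
    rw [sub_eq_add_neg, ← Finset.sum_neg_distrib]
    congr 1
    exact Finset.sum_congr rfl fun m _ => by rw [hvs m]; ring
  rw [hlhs, ← hσ, hveq]
  simp only [dotProduct]
  rw [Finset.mul_sum]
  exact Finset.sum_congr rfl fun t _ => by ring

lemma quad_bound (q b mm K : ℝ) (hb : 0 < b)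
    (hK : 2 * b * K = (q + 2 * b * |mm|) ^ 2) (x : ℝ) :
    q * |x| - b * (x - mm) ^ 2 ≤ K - b / 2 * x ^ 2 := by
  have h2 : x * mm ≤ |x| * |mm| := le_trans (le_abs_self _) (le_of_eq (abs_mul x mm))
  nlinarith [sq_nonneg (b * |x| - (q + 2 * b * |mm|)), sq_abs x, abs_nonneg x, abs_nonneg mm,
    mul_le_mul_of_nonneg_left h2 (by positivity : (0:ℝ) ≤ 2 * b), mul_pos hb hb,
    sq_nonneg (x - mm), mul_nonneg (mul_nonneg hb.le hb.le) (sq_nonneg mm)]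

lemma abs_rpow_le_exp (x : ℝ) {q : ℝ} (hq : 0 ≤ q) : |x| ^ q ≤ Real.exp (q * |x|) := by
  have h1 : |x| ≤ Real.exp |x| := by nlinarith [Real.add_one_le_exp |x|, abs_nonneg x]
  calc |x| ^ q ≤ (Real.exp |x|) ^ q := Real.rpow_le_rpow (abs_nonneg x) h1 hq
    _ = Real.exp (|x| * q) := (Real.exp_mul |x| q).symm
    _ = Real.exp (q * |x|) := by rw [mul_comm]

open Real in
open scoped NNReal in
/-- All absolute moments of a one-dimensional Gaussian are finite. -/
lemma integrable_abs_rpow_gaussianReal (m : ℝ) (v : ℝ≥0) {q : ℝ} (hq : 0 ≤ q) :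
    Integrable (fun y : ℝ => |y| ^ q) (gaussianReal m v) := by
  have hc : Continuous fun y : ℝ => |y| ^ q :=
    continuous_abs.rpow_const fun _ => Or.inr hq
  by_cases hv : v = 0
  · subst hv
    rw [gaussianReal_zero_var]
    refine ⟨hc.aestronglyMeasurable, ?_⟩
    rw [HasFiniteIntegral, lintegral_dirac' _ hc.measurable.enorm]
    exact enorm_lt_top
  · rw [gaussianReal_of_var_ne_zero m hv, gaussianPDF_def]
    rw [integrable_withDensity_iff ((measurable_gaussianPDFReal m v).ennreal_ofReal)
      (ae_of_all _ fun x => ENNReal.ofReal_lt_top)]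
    have hpdf : ∀ x : ℝ, (ENNReal.ofReal (gaussianPDFReal m v x)).toReal = gaussianPDFReal m v x :=
      fun x => ENNReal.toReal_ofReal (gaussianPDFReal_nonneg m v x)
    simp_rw [hpdf]
    have hvpos : (0 : ℝ) < (v : ℝ) := by
      exact_mod_cast pos_iff_ne_zero.mpr hv
    set b : ℝ := ((2 : ℝ) * v)⁻¹ with hbdef
    have hb : 0 < b := by positivity
    set c : ℝ := (Real.sqrt (2 * π * v))⁻¹ with hcdef
    have hcpos : 0 < c := by
      have : 0 < Real.sqrt (2 * π * v) := Real.sqrt_pos.mpr (by positivity)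
      rw [hcdef]; positivity
    set K : ℝ := (q + 2 * b * |m|) ^ 2 / (2 * b) with hKdef
    have hK : 2 * b * K = (q + 2 * b * |m|) ^ 2 := by
      rw [hKdef]; field_simp
    have hmeas : AEStronglyMeasurable (fun x : ℝ => |x| ^ q * gaussianPDFReal m v x) volume :=
      (hc.aestronglyMeasurable).mul (stronglyMeasurable_gaussianPDFReal m v).aestronglyMeasurable
    refine Integrable.mono'
      ((integrable_exp_neg_mul_sq (show (0:ℝ) < b / 2 by positivity)).const_mul
        (c * Real.exp K)) hmeas (ae_of_all _ fun x => ?_)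
    have hpdfx : gaussianPDFReal m v x = c * Real.exp (-(b * (x - m) ^ 2)) := by
      rw [gaussianPDFReal, hcdef]
      congr 1
      rw [hbdef, div_eq_mul_inv]
      ring
    have hnn : 0 ≤ |x| ^ q * gaussianPDFReal m v x :=
      mul_nonneg (Real.rpow_nonneg (abs_nonneg x) q) (gaussianPDFReal_nonneg m v x)
    rw [Real.norm_eq_abs, abs_of_nonneg hnn, hpdfx]
    calc |x| ^ q * (c * Real.exp (-(b * (x - m) ^ 2)))
        ≤ Real.exp (q * |x|) * (c * Real.exp (-(b * (x - m) ^ 2))) := by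
          refine mul_le_mul_of_nonneg_right (abs_rpow_le_exp x hq) ?_
          positivity
      _ = c * Real.exp (q * |x| - b * (x - m) ^ 2) := by
          rw [show q * |x| - b * (x - m) ^ 2 = q * |x| + -(b * (x - m) ^ 2) from by ring,
            Real.exp_add]; ring
      _ ≤ c * Real.exp (K - b / 2 * x ^ 2) := by
          refine mul_le_mul_of_nonneg_left (Real.exp_le_exp.mpr ?_) hcpos.le
          exact quad_bound q b m K hb hK x
      _ = c * Real.exp K * Real.exp (-(b / 2) * x ^ 2) := by
          rw [show K - b / 2 * x ^ 2 = K + -(b / 2) * x ^ 2 from by ring, Real.exp_add]; ring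

/-- Stein-type identity: for a centered nondegenerate Gaussian `X ∈ ℝ^k` with covariance `Ω`
and a differentiable, polynomially bounded `f` with polynomially bounded derivative,
`E[Xᵢ f(X)] = ∑ⱼ aⱼ Ω_{ji}` where
`aⱼ = E[(Xⱼ - Ω_{j j̄} Ω_{j̄ j̄}⁻¹ X_{j̄}) f(X)] / (Ω_{jj} - Ω_{j j̄} Ω_{j̄ j̄}⁻¹ Ω_{j̄ j})`
does not depend on `i`.  (Here the dimension is `k + 1` so that removing one index makes sense.) -/
theorem gaussian_EXf (k : ℕ) (Ω : Matrix (Fin (k + 1)) (Fin (k + 1)) ℝ) (hΩ : Ω.PosDef)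
    (μ : Measure (Fin (k + 1) → ℝ)) (hμ : IsGaussianVec μ Ω)
    (f : (Fin (k + 1) → ℝ) → ℝ) (hf : Differentiable ℝ f)
    (C p : ℝ) (hC : 0 < C) (hp : 0 < p)
    (hfb : ∀ x, |f x| ≤ C * ‖x‖ ^ p + C)
    (hfd : ∀ x, ‖fderiv ℝ f x‖ ≤ C * ‖x‖ ^ p + C) :
    ∀ i : Fin (k + 1),
      ∫ x, x i * f x ∂μ =
        ∑ j : Fin (k + 1),
          ((∫ x, (x j - (fun l => Ω j (j.succAbove l)) ⬝ᵥ
                ((Ω.submatrix j.succAbove j.succAbove)⁻¹).mulVec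
                  (fun l => x (j.succAbove l))) * f x ∂μ) /
            (Ω j j - (fun l => Ω j (j.succAbove l)) ⬝ᵥ
                ((Ω.submatrix j.succAbove j.succAbove)⁻¹).mulVec
                  (fun l => Ω (j.succAbove l) j))) * Ω j i := by
  -- μ is a probability measure
  have hprob : IsProbabilityMeasure μ := by
    have h0 := hμ 0
    have he : (fun x : Fin (k + 1) → ℝ => ∑ i, (0 : Fin (k+1) → ℝ) i * x i) =
        fun _ => (0 : ℝ) := by funext x; simp
    rw [he] at h0
    constructor
    have : μ Set.univ = Measure.map (fun _ : Fin (k+1) → ℝ => (0:ℝ)) μ Set.univ := by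
      rw [Measure.map_apply measurable_const MeasurableSet.univ]; simp
    rw [this, h0]
    simp
  -- each coordinate is a one-dimensional Gaussian
  have hcoord : ∀ l, μ.map (fun x => x l) = gaussianReal 0 (Real.toNNReal (Ω l l)) := by
    intro l
    have h := hμ (Pi.single l 1)
    have h1 : (fun x : Fin (k+1) → ℝ => ∑ i, Pi.single (M := fun _ => ℝ) l (1:ℝ) i * x i) =
        fun x => x l := by
      funext x
      rw [Finset.sum_eq_single l]
      · simp
      · intro c _ hc; rw [Pi.single_eq_of_ne hc]; ring
      · intro h; exact absurd (Finset.mem_univ l) h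
    have h2 : ∑ i, ∑ j, Pi.single (M := fun _ => ℝ) l (1:ℝ) i * Ω i j *
        Pi.single (M := fun _ => ℝ) l (1:ℝ) j = Ω l l := by
      rw [Finset.sum_eq_single l]
      · rw [Finset.sum_eq_single l]
        · simp
        · intro c _ hc; rw [Pi.single_eq_of_ne hc]; ring
        · intro h; exact absurd (Finset.mem_univ l) h
      · intro c _ hc
        apply Finset.sum_eq_zero
        intro d _
        rw [Pi.single_eq_of_ne hc]; ring
      · intro h; exact absurd (Finset.mem_univ l) h
    rw [h1, h2] at h
    exact h
  have hq1 : (0:ℝ) ≤ p + 1 := by linarith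
  -- moment integrability of each coordinate
  have hint : ∀ l, Integrable (fun x => |x l| ^ (p+1)) μ := by
    intro l
    have hg := integrable_abs_rpow_gaussianReal 0 (Real.toNNReal (Ω l l)) hq1
    rw [← hcoord l] at hg
    have hgm : AEStronglyMeasurable (fun y : ℝ => |y| ^ (p+1)) (μ.map fun x => x l) :=
      (continuous_abs.rpow_const fun _ => Or.inr hq1).aestronglyMeasurable
    exact (integrable_map_measure hgm (measurable_pi_apply l).aemeasurable).mp hg
  -- the sup norm is bounded by the sum of coordinate powers
  have hnormbound : ∀ x : Fin (k+1) → ℝ, ‖x‖ ^ (p+1) ≤ ∑ t, |x t| ^ (p+1) := by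
    intro x
    obtain ⟨t0, _, ht0⟩ := Finset.exists_mem_eq_sup Finset.univ Finset.univ_nonempty
      (fun t => (‖x t‖₊ : NNReal))
    have hx : ‖x‖ = |x t0| := by
      rw [Pi.norm_def, ht0]
      simp [Real.norm_eq_abs]
    rw [hx]
    exact Finset.single_le_sum (fun t _ => Real.rpow_nonneg (abs_nonneg _) _) (Finset.mem_univ t0)
  -- integrability of x_l * f(x)
  have hIf : ∀ l, Integrable (fun x => x l * f x) μ := by
    intro l
    have hgint : Integrable (fun x : Fin (k+1) → ℝ =>
        2 * C * ((∑ t, |x t| ^ (p+1)) + 1)) μ :=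
      (((integrable_finset_sum _ fun t _ => hint t).add (integrable_const 1)).const_mul _)
    refine hgint.mono' ((continuous_apply l).mul hf.continuous).aestronglyMeasurable
      (ae_of_all _ fun x => ?_)
    rw [Real.norm_eq_abs, abs_mul]
    have h1 : |x l| ≤ ‖x‖ := by rw [← Real.norm_eq_abs]; exact norm_le_pi_norm x l
    have h2 : |f x| ≤ C * ‖x‖ ^ p + C := hfb x
    have h3 : ‖x‖ * ‖x‖ ^ p = ‖x‖ ^ (p+1) := by
      rw [Real.rpow_add' (norm_nonneg x) (by linarith : p + 1 ≠ 0), Real.rpow_one]; ring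
    have h4 : ‖x‖ ≤ ‖x‖ ^ (p+1) + 1 := by
      rcases le_total ‖x‖ 1 with h | h
      · have : (0:ℝ) ≤ ‖x‖ ^ (p+1) := Real.rpow_nonneg (norm_nonneg x) _
        linarith
      · have h5 : ‖x‖ ^ (1:ℝ) ≤ ‖x‖ ^ (p+1) :=
          Real.rpow_le_rpow_of_exponent_le h (by linarith)
        rw [Real.rpow_one] at h5; linarith
    have h5 : ‖x‖ ^ (p+1) ≤ ∑ t, |x t| ^ (p+1) := hnormbound x
    have h6 : 0 ≤ C * ‖x‖ ^ p + C := le_trans (abs_nonneg _) h2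
    calc |x l| * |f x| ≤ ‖x‖ * (C * ‖x‖ ^ p + C) :=
          mul_le_mul h1 h2 (abs_nonneg _) (norm_nonneg _)
      _ = C * (‖x‖ * ‖x‖ ^ p) + C * ‖x‖ := by ring
      _ = C * ‖x‖ ^ (p+1) + C * ‖x‖ := by rw [h3]
      _ ≤ C * ‖x‖ ^ (p+1) + C * (‖x‖ ^ (p+1) + 1) := by
          have := mul_le_mul_of_nonneg_left h4 hC.le
          linarith
      _ = 2 * C * ‖x‖ ^ (p+1) + C := by ring
      _ ≤ 2 * C * ((∑ t, |x t| ^ (p+1)) + 1) := by nlinarith [h5, hC]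
  -- integral of a linear combination times f
  have hIsum : ∀ c : Fin (k+1) → ℝ,
      ∫ x, (∑ t, c t * x t) * f x ∂μ = ∑ t, c t * ∫ x, x t * f x ∂μ := by
    intro c
    have he : (fun x : Fin (k+1) → ℝ => (∑ t, c t * x t) * f x) =
        fun x => ∑ t, c t * (x t * f x) := by
      funext x
      rw [Finset.sum_mul]
      exact Finset.sum_congr rfl fun t _ => by ring
    rw [he, integral_finset_sum _ fun t _ => ((hIf t).const_mul (c t))]
    exact Finset.sum_congr rfl fun t _ => integral_const_mul _ _
  have hΩdet : IsUnit Ω.det := isUnit_iff_ne_zero.mpr hΩ.det_pos.ne'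
  have hsymm : ∀ a b, Ω a b = Ω b a := by
    intro a b
    have := congrFun (congrFun hΩ.1 a) b
    simpa using this.symm
  have hinvsymm : ∀ a c, Ω⁻¹ a c = Ω⁻¹ c a := by
    intro a c
    have hΩt : Ωᵀ = Ω := hΩ.1
    have h3 : Ω⁻¹ᵀ = Ω⁻¹ := by rw [transpose_nonsing_inv, hΩt]
    nth_rewrite 1 [← h3]
    rw [transpose_apply]
  -- each coefficient a_j equals ∑ t (Ω⁻¹)_{jt} E[X_t f(X)]
  have hterm : ∀ j : Fin (k+1),
      (∫ x, (x j - (fun l => Ω j (j.succAbove l)) ⬝ᵥ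
            ((Ω.submatrix j.succAbove j.succAbove)⁻¹).mulVec
              (fun l => x (j.succAbove l))) * f x ∂μ) /
        (Ω j j - (fun l => Ω j (j.succAbove l)) ⬝ᵥ
            ((Ω.submatrix j.succAbove j.succAbove)⁻¹).mulVec
              (fun l => Ω (j.succAbove l) j)) =
      ∑ t, Ω⁻¹ j t * ∫ x, x t * f x ∂μ := by
    intro j
    obtain ⟨hσpos, hid⟩ := schur_key Ω hΩ j
    have he : (fun x : Fin (k+1) → ℝ =>
        (x j - (fun l => Ω j (j.succAbove l)) ⬝ᵥ
            ((Ω.submatrix j.succAbove j.succAbove)⁻¹).mulVec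
              (fun l => x (j.succAbove l))) * f x) =
        fun x => (Ω j j - (fun l => Ω j (j.succAbove l)) ⬝ᵥ
            ((Ω.submatrix j.succAbove j.succAbove)⁻¹).mulVec
              (fun l => Ω (j.succAbove l) j)) *
          ((∑ t, Ω⁻¹ j t * x t) * f x) := by
      funext x
      rw [hid x]
      ring
    rw [he, integral_const_mul, mul_div_cancel_left₀ _ hσpos.ne']
    exact hIsum _
  -- final linear algebra
  intro i
  have hinv : ∀ t, ∑ j, Ω⁻¹ j t * Ω j i = if t = i then 1 else 0 := by
    intro t
    rw [show ∑ j, Ω⁻¹ j t * Ω j i = ∑ j, Ω⁻¹ t j * Ω j i from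
      Finset.sum_congr rfl fun j _ => by rw [hinvsymm]]
    rw [← Matrix.mul_apply, nonsing_inv_mul _ hΩdet, Matrix.one_apply]
  symm
  calc ∑ j, ((∫ x, (x j - (fun l => Ω j (j.succAbove l)) ⬝ᵥ
            ((Ω.submatrix j.succAbove j.succAbove)⁻¹).mulVec
              (fun l => x (j.succAbove l))) * f x ∂μ) /
        (Ω j j - (fun l => Ω j (j.succAbove l)) ⬝ᵥ
            ((Ω.submatrix j.succAbove j.succAbove)⁻¹).mulVec
              (fun l => Ω (j.succAbove l) j))) * Ω j i
      = ∑ j, (∑ t, Ω⁻¹ j t * ∫ x, x t * f x ∂μ) * Ω j i :=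
        Finset.sum_congr rfl fun j _ => by rw [hterm j]
    _ = ∑ j, ∑ t, (∫ x, x t * f x ∂μ) * (Ω⁻¹ j t * Ω j i) := by
        refine Finset.sum_congr rfl fun j _ => ?_
        rw [Finset.sum_mul]
        exact Finset.sum_congr rfl fun t _ => by ring
    _ = ∑ t, ∑ j, (∫ x, x t * f x ∂μ) * (Ω⁻¹ j t * Ω j i) := Finset.sum_comm
    _ = ∑ t, (∫ x, x t * f x ∂μ) * ∑ j, Ω⁻¹ j t * Ω j i := by
        refine Finset.sum_congr rfl fun t _ => ?_
        rw [Finset.mul_sum]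
    _ = ∑ t, (∫ x, x t * f x ∂μ) * (if t = i then 1 else 0) := by
        refine Finset.sum_congr rfl fun t _ => ?_
        rw [hinv t]
    _ = ∫ x, x i * f x ∂μ := by
        simp [mul_ite, Finset.sum_ite_eq']
end

section
/- Let Π ∈ ℝ^{n×n} be an orthogonal projection matrix of rank k whose diagonal entries are all strictly positive. Let D = Diag(Π) be the diagonal matrix of the diagonal entries of Π, and let C = D^{-1/2} Π D^{-1/2} be the associated correlation matrix. Then with r = n − k, the off-diagonal entries of C satisfy ∑_{i<j} C_{ij}² ≤ 0.5 · (r² + r). -/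
open Matrix

/-- The trace of an idempotent real matrix equals its rank. -/
lemma trace_eq_rank_of_idem {n : ℕ} (P : Matrix (Fin n) (Fin n) ℝ)
    (hidem : P * P = P) : Matrix.trace P = (P.rank : ℝ) := by
  have hproj : LinearMap.IsProj (LinearMap.range P.mulVecLin) P.mulVecLin := by
    constructor
    · intro x; exact LinearMap.mem_range_self _ x
    · rintro x ⟨y, rfl⟩
      have : (P * P).mulVecLin y = P.mulVecLin y := by rw [hidem]
      simpa [Matrix.mulVecLin_mul] using this
  have h := hproj.trace
  rw [LinearMap.trace_eq_matrix_trace ℝ (Pi.basisFun ℝ (Fin n)),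
    LinearMap.toMatrix_eq_toMatrix'] at h
  have h2 : LinearMap.toMatrix' P.mulVecLin = P := by
    ext i j
    simp [LinearMap.toMatrix'_apply, Matrix.mulVecLin_apply, Matrix.mulVec, dotProduct,
      Pi.single_apply, mul_ite, mul_one, mul_zero]
  rw [h2] at h
  rw [h]
  rfl

/-- Auxiliary: sum over the strict upper triangle equals sum over strict lower triangle
for a "symmetric" function. -/
lemma sum_lt_eq_sum_gt {n : ℕ} (f : Fin n → Fin n → ℝ) (hf : ∀ i j, f i j = f j i) :
    ∑ q ∈ Finset.univ.filter (fun q : Fin n × Fin n => q.1 < q.2), f q.1 q.2 =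
    ∑ q ∈ Finset.univ.filter (fun q : Fin n × Fin n => q.2 < q.1), f q.1 q.2 := by
  refine Finset.sum_nbij' (fun q => q.swap) (fun q => q.swap) ?_ ?_ ?_ ?_ ?_
  · intro a ha
    simp only [Finset.mem_filter, Finset.mem_univ, true_and] at ha ⊢
    exact ha
  · intro a ha
    simp only [Finset.mem_filter, Finset.mem_univ, true_and] at ha ⊢
    exact ha
  · intro a _; simp
  · intro a _; simp
  · intro a _
    exact hf a.1 a.2

/-- Let `P` be an `n × n` orthogonal projection matrix (symmetric idempotent) of rank `k`
with strictly positive diagonal, and let `C = D^{-1/2} P D^{-1/2}` be the associated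
correlation matrix, `D = Diag(P)`.  Then with `r = n - k`,
`∑_{i<j} Cᵢⱼ² ≤ 0.5 (r² + r)`. -/
theorem projectionCorrelation (n k : ℕ) (P : Matrix (Fin n) (Fin n) ℝ)
    (hsym : P.IsSymm) (hidem : P * P = P) (hrank : P.rank = k)
    (hdiag : ∀ i, 0 < P i i) :
    ∑ q ∈ Finset.univ.filter (fun q : Fin n × Fin n => q.1 < q.2),
        (P q.1 q.2 / (Real.sqrt (P q.1 q.1) * Real.sqrt (P q.2 q.2))) ^ 2 ≤
      0.5 * (((n : ℝ) - k) ^ 2 + ((n : ℝ) - k)) := by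
  classical
  set a : Fin n → ℝ := fun i => P i i with ha_def
  have ha : ∀ i, 0 < a i := hdiag
  -- row sums of squares
  have key2 : ∀ i, ∑ j, (P i j) ^ 2 = a i := by
    intro i
    have h1 : (P * P) i i = P i i := by rw [hidem]
    rw [Matrix.mul_apply] at h1
    calc ∑ j, (P i j) ^ 2 = ∑ j, P i j * P j i := by
          refine Finset.sum_congr rfl fun j _ => ?_
          rw [sq, hsym.apply i j]
      _ = a i := h1
  -- Cauchy–Schwarz: P i j ^ 2 ≤ a i * a j
  have key1 : ∀ i j, (P i j) ^ 2 ≤ a i * a j := by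
    intro i j
    have hij : P i j = ∑ l, P i l * P j l := by
      have h1 : (P * P) i j = P i j := by rw [hidem]
      rw [Matrix.mul_apply] at h1
      rw [← h1]
      exact Finset.sum_congr rfl fun l _ => by rw [hsym.apply l j]
    calc (P i j) ^ 2 = (∑ l, P i l * P j l) ^ 2 := by rw [hij]
      _ ≤ (∑ l, (P i l) ^ 2) * (∑ l, (P j l) ^ 2) :=
          Finset.sum_mul_sq_le_sq_mul_sq _ _ _
      _ = a i * a j := by rw [key2 i, key2 j]
  -- diagonal entries are at most 1
  have ha1 : ∀ i, a i ≤ 1 := by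
    intro i
    have h2 : (P i i) ^ 2 ≤ ∑ j, (P i j) ^ 2 :=
      Finset.single_le_sum (f := fun j => (P i j) ^ 2)
        (fun j _ => sq_nonneg _) (Finset.mem_univ i)
    rw [key2 i] at h2
    have h3 : a i ^ 2 ≤ a i := h2
    nlinarith [ha i]
  -- trace equals k
  have htr : ∑ i, a i = (k : ℝ) := by
    have := trace_eq_rank_of_idem P hidem
    rw [hrank] at this
    rw [← this]
    rfl
  set t : Fin n → ℝ := fun i => (1 - a i) / a i with ht_def
  have ht0 : ∀ i, 0 ≤ t i := fun i =>
    div_nonneg (by linarith [ha1 i]) (le_of_lt (ha i))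
  have hta : ∀ i, t i * a i = 1 - a i := by
    intro i
    simp only [ht_def]; exact div_mul_cancel₀ _ (ha i).ne'
  set r : ℝ := (n : ℝ) - k with hr_def
  have hsumta : ∑ i, t i * a i = r := by
    simp only [hta]
    rw [Finset.sum_sub_distrib, htr]
    simp [hr_def]
  -- rewrite each summand
  have hC : ∀ i j, (P i j / (Real.sqrt (a i) * Real.sqrt (a j))) ^ 2
      = (1 + t i) * (1 + t j) * (P i j) ^ 2 := by
    intro i j
    have h1 : (Real.sqrt (a i) * Real.sqrt (a j)) ^ 2 = a i * a j := by
      rw [mul_pow, Real.sq_sqrt (le_of_lt (ha i)), Real.sq_sqrt (le_of_lt (ha j))]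
    have h2 : (1 : ℝ) + t i = 1 / a i := by
      simp only [ht_def]; rw [eq_div_iff (ha i).ne', add_mul, div_mul_cancel₀ _ (ha i).ne']; ring
    have h3 : (1 : ℝ) + t j = 1 / a j := by
      simp only [ht_def]; rw [eq_div_iff (ha j).ne', add_mul, div_mul_cancel₀ _ (ha j).ne']; ring
    rw [div_pow, h1, h2, h3]
    field_simp
  -- the full double sum
  set T : ℝ := ∑ i, ∑ j, (1 + t i) * (1 + t j) * (P i j) ^ 2 with hT_def
  -- T = k + r + r + (cross term), cross term ≤ r ^ 2
  have hTle : T ≤ (k : ℝ) + r + r + r ^ 2 := by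
    have hexp : T = (∑ i, ∑ j, (P i j) ^ 2) + (∑ i, ∑ j, t i * (P i j) ^ 2)
        + (∑ i, ∑ j, t j * (P i j) ^ 2) + (∑ i, ∑ j, (t i * t j) * (P i j) ^ 2) := by
      rw [hT_def, ← Finset.sum_add_distrib, ← Finset.sum_add_distrib,
        ← Finset.sum_add_distrib]
      refine Finset.sum_congr rfl fun i _ => ?_
      rw [← Finset.sum_add_distrib, ← Finset.sum_add_distrib, ← Finset.sum_add_distrib]
      refine Finset.sum_congr rfl fun j _ => ?_
      ring
    have hA : (∑ i, ∑ j, (P i j) ^ 2) = (k : ℝ) := by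
      rw [← htr]
      exact Finset.sum_congr rfl fun i _ => key2 i
    have hB1 : (∑ i, ∑ j, t i * (P i j) ^ 2) = r := by
      rw [← hsumta]
      refine Finset.sum_congr rfl fun i _ => ?_
      rw [← Finset.mul_sum, key2 i]
    have hB2 : (∑ i, ∑ j, t j * (P i j) ^ 2) = r := by
      rw [Finset.sum_comm, ← hsumta]
      refine Finset.sum_congr rfl fun j _ => ?_
      rw [← Finset.mul_sum]
      congr 1
      rw [← key2 j]
      exact Finset.sum_congr rfl fun i _ => by rw [hsym.apply i j]
    have hCle : (∑ i, ∑ j, (t i * t j) * (P i j) ^ 2) ≤ r ^ 2 := by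
      have h1 : (∑ i, ∑ j, (t i * t j) * (P i j) ^ 2)
          ≤ ∑ i, ∑ j, (t i * a i) * (t j * a j) := by
        refine Finset.sum_le_sum fun i _ => Finset.sum_le_sum fun j _ => ?_
        have := key1 i j
        have h0 : 0 ≤ t i * t j := mul_nonneg (ht0 i) (ht0 j)
        nlinarith
      have h2 : (∑ i, ∑ j, (t i * a i) * (t j * a j)) = r ^ 2 := by
        rw [← hsumta, sq]
        rw [Finset.sum_mul_sum]
      linarith
    rw [hexp, hA, hB1, hB2]
    linarith
  -- relate the strict upper-triangular sum to T
  set f : Fin n → Fin n → ℝ :=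
    fun i j => (P i j / (Real.sqrt (a i) * Real.sqrt (a j))) ^ 2 with hf_def
  have hfsymm : ∀ i j, f i j = f j i := by
    intro i j
    simp only [hf_def]
    rw [hsym.apply i j, mul_comm]
  have hfdiag : ∀ i, f i i = 1 := by
    intro i
    simp only [hf_def]
    have hs : Real.sqrt (a i) * Real.sqrt (a i) = a i :=
      Real.mul_self_sqrt (le_of_lt (ha i))
    rw [hs, div_self (ha i).ne', one_pow]
  have hfT : ∑ q : Fin n × Fin n, f q.1 q.2 = T := by
    rw [← Finset.univ_product_univ, Finset.sum_product, hT_def]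
    exact Finset.sum_congr rfl fun i _ => Finset.sum_congr rfl fun j _ => hC i j
  -- split the full sum into lt, gt, diag
  set S : ℝ := ∑ q ∈ Finset.univ.filter (fun q : Fin n × Fin n => q.1 < q.2), f q.1 q.2
    with hS_def
  have hsplit : T = 2 * S + n := by
    have h1 : ∑ q : Fin n × Fin n, f q.1 q.2 =
        (∑ q ∈ Finset.univ.filter (fun q : Fin n × Fin n => q.1 < q.2), f q.1 q.2)
        + ∑ q ∈ Finset.univ.filter (fun q : Fin n × Fin n => ¬ q.1 < q.2), f q.1 q.2 :=
      (Finset.sum_filter_add_sum_filter_not _ _ _).symm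
    have h2 : ∑ q ∈ Finset.univ.filter (fun q : Fin n × Fin n => ¬ q.1 < q.2), f q.1 q.2
        = (∑ q ∈ Finset.univ.filter
            (fun q : Fin n × Fin n => ¬ q.1 < q.2 ∧ q.2 < q.1), f q.1 q.2)
          + ∑ q ∈ Finset.univ.filter
            (fun q : Fin n × Fin n => ¬ q.1 < q.2 ∧ ¬ q.2 < q.1), f q.1 q.2 := by
      rw [← Finset.sum_filter_add_sum_filter_not
        (Finset.univ.filter (fun q : Fin n × Fin n => ¬ q.1 < q.2))
        (fun q : Fin n × Fin n => q.2 < q.1)]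
      rw [Finset.filter_filter, Finset.filter_filter]
    have h3 : (Finset.univ.filter (fun q : Fin n × Fin n => ¬ q.1 < q.2 ∧ q.2 < q.1))
        = Finset.univ.filter (fun q : Fin n × Fin n => q.2 < q.1) := by
      ext q
      simp only [Finset.mem_filter, Finset.mem_univ, true_and]
      constructor
      · rintro ⟨_, h⟩; exact h
      · intro h; exact ⟨fun h' => absurd h (lt_asymm h'), h⟩
    have h4 : ∑ q ∈ Finset.univ.filter
        (fun q : Fin n × Fin n => ¬ q.1 < q.2 ∧ ¬ q.2 < q.1), f q.1 q.2 = n := by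
      have heq : (Finset.univ.filter
          (fun q : Fin n × Fin n => ¬ q.1 < q.2 ∧ ¬ q.2 < q.1))
          = Finset.univ.image (fun i : Fin n => (i, i)) := by
        ext q
        simp only [Finset.mem_filter, Finset.mem_univ, true_and, Finset.mem_image]
        constructor
        · rintro ⟨h1', h2'⟩
          refine ⟨q.1, ?_⟩
          have hq : q.1 = q.2 := le_antisymm (not_lt.mp h2') (not_lt.mp h1')
          obtain ⟨x, y⟩ := q
          simp only at hq
          rw [hq]
        · rintro ⟨i, rfl⟩
          exact ⟨lt_irrefl i, lt_irrefl i⟩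
      rw [heq, Finset.sum_image (by
        intro x _ y _ h
        exact congrArg Prod.fst h)]
      simp only [hfdiag]
      simp
    have h5 : ∑ q ∈ Finset.univ.filter (fun q : Fin n × Fin n => q.2 < q.1), f q.1 q.2
        = S := by
      rw [hS_def]
      exact (sum_lt_eq_sum_gt f hfsymm).symm
    rw [← hfT, h1, h2, h3, h4, h5, hS_def]
    ring
  -- conclude
  have hk : (k : ℝ) = (n : ℝ) - r := by rw [hr_def]; ring
  have h05 : (0.5 : ℝ) = 1 / 2 := by norm_num
  have : S ≤ 0.5 * (r ^ 2 + r) := by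
    rw [hsplit] at hTle
    rw [hk] at hTle
    rw [h05]
    nlinarith [hTle]
  exact this
end

section
/- Let Π ∈ ℝ^{n×n} be an orthogonal projection matrix of rank k whose diagonal entries are all strictly positive. Let D = Diag(Π) be the diagonal matrix of the diagonal entries of Π, and let C = D^{-1/2} Π D^{-1/2} be the associated correlation matrix. Then with r = n − k, the off-diagonal entries of C satisfy ∑_{i<j} C_{ij}² ≤ 2r² + 6r. -/
open Matrix Finset

private lemma rowIdAux {n : ℕ} {M : Matrix (Fin n) (Fin n) ℝ}
    (hs : M.IsSymm) (hi : M * M = M) (u v : Fin n) :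
    M u v = ∑ l, M u l * M v l := by
  have h := congrFun (congrFun hi u) v
  rw [Matrix.mul_apply] at h
  rw [← h]
  exact Finset.sum_congr rfl fun l _ => by rw [hs.apply v l]

private lemma sqApplyAux {n : ℕ} {M : Matrix (Fin n) (Fin n) ℝ}
    (hs : M.IsSymm) (hi : M * M = M) (i j : Fin n) :
    M i j ^ 2 ≤ M i i * M j j := by
  have hd : ∀ u : Fin n, ∑ l, M u l ^ 2 = M u u := by
    intro u
    rw [rowIdAux hs hi u u]
    exact Finset.sum_congr rfl fun l _ => sq (M u l) ▸ rfl
  calc M i j ^ 2 = (∑ l, M i l * M j l) ^ 2 := by rw [← rowIdAux hs hi]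
    _ ≤ (∑ l, M i l ^ 2) * (∑ l, M j l ^ 2) :=
        Finset.sum_mul_sq_le_sq_mul_sq _ _ _
    _ = M i i * M j j := by rw [hd, hd]

private lemma traceAux {n k : ℕ} {P : Matrix (Fin n) (Fin n) ℝ}
    (hsym : P.IsSymm) (hidem : P * P = P) (hrank : P.rank = k) :
    P.trace = (k : ℝ) := by
  have hherm : P.IsHermitian := by
    rw [Matrix.IsHermitian, conjTranspose_eq_transpose_of_trivial]; exact hsym
  have heig : ∀ i, hherm.eigenvalues i = 0 ∨ hherm.eigenvalues i = 1 := by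
    intro i
    set μ := hherm.eigenvalues i with hμ
    have hv := hherm.mulVec_eigenvectorBasis i
    have h2 : (μ * μ) • ⇑(hherm.eigenvectorBasis i) = μ • ⇑(hherm.eigenvectorBasis i) := by
      have h3 : P *ᵥ (P *ᵥ ⇑(hherm.eigenvectorBasis i)) = P *ᵥ ⇑(hherm.eigenvectorBasis i) := by
        rw [mulVec_mulVec, hidem]
      rw [hv, mulVec_smul, hv, smul_smul] at h3
      exact h3
    have hvne : ⇑(hherm.eigenvectorBasis i) ≠ 0 := by
      intro h
      have h1 := hherm.eigenvectorBasis.orthonormal.1 i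
      have : (hherm.eigenvectorBasis i : EuclideanSpace ℝ (Fin n)) = 0 := by
        ext l; exact congrFun h l
      rw [this, norm_zero] at h1
      norm_num at h1
    have h4 : (μ * μ - μ) • ⇑(hherm.eigenvectorBasis i) = 0 := by
      rw [sub_smul, h2, sub_self]
    rcases smul_eq_zero.mp h4 with h5 | h5
    · have : μ * (μ - 1) = 0 := by ring_nf; ring_nf at h5; linarith
      rcases mul_eq_zero.mp this with h6 | h6
      · exact Or.inl h6
      · exact Or.inr (by linarith [sub_eq_zero.mp h6])
    · exact absurd h5 hvne
  have htr : P.trace = ∑ i, hherm.eigenvalues i := by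
    nth_rewrite 1 [hherm.spectral_theorem]
    rw [Unitary.conjStarAlgAut_apply, Matrix.trace_mul_cycle, Unitary.coe_star_mul_self, one_mul, Matrix.trace_diagonal]
    simp
  have hsum : ∑ i, hherm.eigenvalues i = (k : ℝ) := by
    have h1 := hherm.rank_eq_card_non_zero_eigs
    rw [hrank] at h1
    rw [Fintype.card_subtype] at h1
    calc ∑ i, hherm.eigenvalues i
        = ∑ i, if hherm.eigenvalues i ≠ 0 then (1:ℝ) else 0 := by
          refine Finset.sum_congr rfl fun i _ => ?_
          rcases heig i with h | h <;> simp [h]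
      _ = ((univ.filter (fun i => hherm.eigenvalues i ≠ 0)).card : ℝ) := by
          rw [Finset.sum_boole]
      _ = (k : ℝ) := by rw [← h1]
  rw [htr, hsum]

/-- Let `P` be an `n × n` orthogonal projection matrix (symmetric idempotent) of rank `k`
with strictly positive diagonal, and let `C = D^{-1/2} P D^{-1/2}` be the associated
correlation matrix, `D = Diag(P)`.  Then with `r = n - k`,
`∑_{i<j} Cᵢⱼ² ≤ 2r² + 6r`. -/
theorem projectionCorrelationWeak (n k : ℕ) (P : Matrix (Fin n) (Fin n) ℝ)
    (hsym : P.IsSymm) (hidem : P * P = P) (hrank : P.rank = k)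
    (hdiag : ∀ i, 0 < P i i) :
    ∑ q ∈ Finset.univ.filter (fun q : Fin n × Fin n => q.1 < q.2),
        (P q.1 q.2 / (Real.sqrt (P q.1 q.1) * Real.sqrt (P q.2 q.2))) ^ 2 ≤
      2 * ((n : ℝ) - k) ^ 2 + 6 * ((n : ℝ) - k) := by
  classical
  -- complementary projection
  have hQsym : ((1 : Matrix (Fin n) (Fin n) ℝ) - P).IsSymm := Matrix.isSymm_one.sub hsym
  have hQidem : ((1 : Matrix (Fin n) (Fin n) ℝ) - P) * ((1 : Matrix (Fin n) (Fin n) ℝ) - P)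
      = (1 : Matrix (Fin n) (Fin n) ℝ) - P := by
    rw [sub_mul, one_mul, mul_sub, mul_one, hidem, sub_self, sub_zero]
  have hQapp : ∀ i j : Fin n, i ≠ j → ((1 : Matrix (Fin n) (Fin n) ℝ) - P) i j = -(P i j) := by
    intro i j hij
    simp [Matrix.sub_apply, Matrix.one_apply_ne hij]
  have hQdiagapp : ∀ i : Fin n, ((1 : Matrix (Fin n) (Fin n) ℝ) - P) i i = 1 - P i i := by
    intro i; simp [Matrix.sub_apply, Matrix.one_apply_eq]
  have ha0 : ∀ i, 0 ≤ 1 - P i i := by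
    intro i
    have h := rowIdAux hQsym hQidem i i
    rw [hQdiagapp] at h
    rw [h]
    exact Finset.sum_nonneg fun l _ => mul_self_nonneg _
  have hCSP : ∀ i j, P i j ^ 2 ≤ P i i * P j j := sqApplyAux hsym hidem
  have hCSQ : ∀ i j, i ≠ j → P i j ^ 2 ≤ (1 - P i i) * (1 - P j j) := by
    intro i j hij
    have h := sqApplyAux hQsym hQidem i j
    rw [hQapp i j hij, hQdiagapp, hQdiagapp, neg_sq] at h
    exact h
  have hoff : ∀ i, ∑ j ∈ univ.erase i, P i j ^ 2 = P i i - P i i ^ 2 := by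
    intro i
    have h : ∑ j, P i j ^ 2 = P i i := by
      rw [rowIdAux hsym hidem i i]
      exact Finset.sum_congr rfl fun l _ => sq (P i l) ▸ rfl
    have h2 := Finset.add_sum_erase univ (fun j => P i j ^ 2) (mem_univ i)
    nlinarith [h2]
  -- the correlation entries
  set F : Fin n → Fin n → ℝ :=
    fun i j => if i = j then 0 else P i j ^ 2 / (P i i * P j j) with hF
  have hFnn : ∀ i j, 0 ≤ F i j := by
    intro i j
    by_cases h : i = j
    · simp [hF, h]
    · simp only [hF, if_neg h]
      exact div_nonneg (sq_nonneg _) (mul_nonneg (hdiag i).le (hdiag j).le)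
  have hFsymm : ∀ i j, F i j = F j i := by
    intro i j
    by_cases h : i = j
    · rw [h]
    · simp only [hF, if_neg h, if_neg (Ne.symm h)]
      rw [hsym.apply i j, mul_comm]
  have hF1 : ∀ i j, F i j ≤ 1 := by
    intro i j
    by_cases h : i = j
    · simp [hF, h]
    · simp only [hF, if_neg h]
      exact (div_le_one (mul_pos (hdiag i) (hdiag j))).mpr (hCSP i j)
  -- membership sets
  set Sp : Finset (Fin n) := univ.filter (fun i => (2:ℝ)⁻¹ ≤ P i i) with hSp
  set Tp : Finset (Fin n) := univ.filter (fun i => ¬ (2:ℝ)⁻¹ ≤ P i i) with hTp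
  -- row bound
  have hrowS : ∀ u, ∑ v ∈ Sp, F u v ≤ 2 * (1 - P u u) := by
    intro u
    have step1 : ∑ v ∈ Sp, F u v ≤
        ∑ v ∈ Sp, (if u = v then 0 else 2 * P u v ^ 2 / P u u) := by
      refine Finset.sum_le_sum fun v hv => ?_
      by_cases h : u = v
      · simp [hF, h]
      · simp only [hF, if_neg h]
        have hv2 : (2:ℝ)⁻¹ ≤ P v v := by
          rw [hSp] at hv
          exact (Finset.mem_filter.mp hv).2
        rw [div_le_div_iff₀ (mul_pos (hdiag u) (hdiag v)) (hdiag u)]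
        nlinarith [mul_nonneg (mul_nonneg (sq_nonneg (P u v)) (hdiag u).le)
          (by linarith : (0:ℝ) ≤ 2 * P v v - 1)]
    have step2 : ∑ v ∈ Sp, (if u = v then 0 else 2 * P u v ^ 2 / P u u) ≤
        ∑ v ∈ univ, (if u = v then 0 else 2 * P u v ^ 2 / P u u) := by
      refine Finset.sum_le_sum_of_subset_of_nonneg (Finset.filter_subset _ _) fun v _ _ => ?_
      by_cases h : u = v
      · simp [h]
      · simp only [if_neg h]
        exact div_nonneg (by positivity) (hdiag u).le
    have step3 : ∑ v ∈ univ, (if u = v then 0 else 2 * P u v ^ 2 / P u u)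
        = 2 * (1 - P u u) := by
      rw [← Finset.sum_erase_add univ _ (mem_univ u)]
      rw [if_pos rfl, add_zero]
      have : ∑ v ∈ univ.erase u, (if u = v then 0 else 2 * P u v ^ 2 / P u u)
          = ∑ v ∈ univ.erase u, (2 / P u u) * P u v ^ 2 := by
        refine Finset.sum_congr rfl fun v hv => ?_
        rw [if_neg (Ne.symm (Finset.ne_of_mem_erase hv))]
        ring
      rw [this, ← Finset.mul_sum, hoff u, div_mul_eq_mul_div, eq_comm,
        eq_div_iff (hdiag u).ne']
      ring
    linarith
  -- pointwise bound on SS and TT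
  have hSS : ∀ i j, i ∈ Sp → j ∈ Sp → F i j ≤ 4 * ((1 - P i i) * (1 - P j j)) := by
    intro i j hi hj
    have hi2 : (2:ℝ)⁻¹ ≤ P i i := (Finset.mem_filter.mp hi).2
    have hj2 : (2:ℝ)⁻¹ ≤ P j j := (Finset.mem_filter.mp hj).2
    by_cases h : i = j
    · simp only [hF, if_pos h]
      exact mul_nonneg (by norm_num) (mul_nonneg (ha0 i) (ha0 j))
    · simp only [hF, if_neg h]
      rw [div_le_iff₀ (mul_pos (hdiag i) (hdiag j))]
      have hq := hCSQ i j h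
      nlinarith [mul_nonneg (ha0 i) (ha0 j),
        mul_nonneg (mul_nonneg (ha0 i) (ha0 j))
          (mul_nonneg (by linarith : (0:ℝ) ≤ 2 * P i i - 1)
            (by linarith : (0:ℝ) ≤ 2 * P j j - 1)),
        mul_nonneg (mul_nonneg (ha0 i) (ha0 j))
          (by linarith : (0:ℝ) ≤ 2 * P i i - 1),
        mul_nonneg (mul_nonneg (ha0 i) (ha0 j))
          (by linarith : (0:ℝ) ≤ 2 * P j j - 1)]
  have hTT : ∀ i j, i ∈ Tp → j ∈ Tp → F i j ≤ 4 * ((1 - P i i) * (1 - P j j)) := by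
    intro i j hi hj
    have hi2 : P i i < 2⁻¹ := lt_of_not_ge (Finset.mem_filter.mp hi).2
    have hj2 : P j j < 2⁻¹ := lt_of_not_ge (Finset.mem_filter.mp hj).2
    have h1 := hF1 i j
    nlinarith [hF1 i j]
  -- split the double sum
  set s := ∑ i ∈ Sp, (1 - P i i) with hs
  set t := ∑ i ∈ Tp, (1 - P i i) with ht
  have hs0 : 0 ≤ s := Finset.sum_nonneg fun i _ => ha0 i
  have ht0 : 0 ≤ t := Finset.sum_nonneg fun i _ => ha0 i
  have hst : s + t = (n:ℝ) - k := by
    rw [hs, ht, Finset.sum_filter_add_sum_filter_not]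
    rw [Finset.sum_sub_distrib, Finset.sum_const, Finset.card_univ, Fintype.card_fin]
    have := traceAux hsym hidem hrank
    rw [Matrix.trace] at this
    simp only [Matrix.diag] at this
    rw [this]
    simp
  have hB1 : ∑ i ∈ Sp, ∑ j ∈ Sp, F i j ≤ 4 * (s * s) := by
    calc ∑ i ∈ Sp, ∑ j ∈ Sp, F i j
        ≤ ∑ i ∈ Sp, ∑ j ∈ Sp, 4 * ((1 - P i i) * (1 - P j j)) :=
          Finset.sum_le_sum fun i hi => Finset.sum_le_sum fun j hj => hSS i j hi hj
      _ = ∑ i ∈ Sp, (4 * (1 - P i i)) * s := by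
          refine Finset.sum_congr rfl fun i _ => ?_
          rw [hs, Finset.mul_sum]
          exact Finset.sum_congr rfl fun j _ => by ring
      _ = 4 * (s * s) := by
          rw [hs, ← Finset.sum_mul]
          rw [← Finset.mul_sum]
          ring
  have hB4 : ∑ i ∈ Tp, ∑ j ∈ Tp, F i j ≤ 4 * (t * t) := by
    calc ∑ i ∈ Tp, ∑ j ∈ Tp, F i j
        ≤ ∑ i ∈ Tp, ∑ j ∈ Tp, 4 * ((1 - P i i) * (1 - P j j)) :=
          Finset.sum_le_sum fun i hi => Finset.sum_le_sum fun j hj => hTT i j hi hj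
      _ = ∑ i ∈ Tp, (4 * (1 - P i i)) * t := by
          refine Finset.sum_congr rfl fun i _ => ?_
          rw [ht, Finset.mul_sum]
          exact Finset.sum_congr rfl fun j _ => by ring
      _ = 4 * (t * t) := by
          rw [ht, ← Finset.sum_mul, ← Finset.mul_sum]
          ring
  have hB3 : ∑ i ∈ Tp, ∑ j ∈ Sp, F i j ≤ 2 * t := by
    calc ∑ i ∈ Tp, ∑ j ∈ Sp, F i j
        ≤ ∑ i ∈ Tp, 2 * (1 - P i i) := Finset.sum_le_sum fun i _ => hrowS i
      _ = 2 * t := by rw [ht, Finset.mul_sum]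
  have hB2 : ∑ i ∈ Sp, ∑ j ∈ Tp, F i j ≤ 2 * t := by
    rw [Finset.sum_comm]
    calc ∑ j ∈ Tp, ∑ i ∈ Sp, F i j
        = ∑ j ∈ Tp, ∑ i ∈ Sp, F j i := by
          exact Finset.sum_congr rfl fun j _ => Finset.sum_congr rfl fun i _ => hFsymm i j
      _ ≤ ∑ j ∈ Tp, 2 * (1 - P j j) := Finset.sum_le_sum fun j _ => hrowS j
      _ = 2 * t := by rw [ht, Finset.mul_sum]
  have hTot : ∑ i, ∑ j, F i j
      = ((∑ i ∈ Sp, ∑ j ∈ Sp, F i j) + ∑ i ∈ Sp, ∑ j ∈ Tp, F i j)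
        + ((∑ i ∈ Tp, ∑ j ∈ Sp, F i j) + ∑ i ∈ Tp, ∑ j ∈ Tp, F i j) := by
    have inner : ∀ i, ∑ j, F i j = ∑ j ∈ Sp, F i j + ∑ j ∈ Tp, F i j := fun i =>
      (Finset.sum_filter_add_sum_filter_not univ (fun j => (2:ℝ)⁻¹ ≤ P j j) (F i)).symm
    calc ∑ i, ∑ j, F i j
        = ∑ i ∈ Sp, ∑ j, F i j + ∑ i ∈ Tp, ∑ j, F i j :=
          (Finset.sum_filter_add_sum_filter_not univ (fun i => (2:ℝ)⁻¹ ≤ P i i)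
            (fun i => ∑ j, F i j)).symm
      _ = _ := by
          rw [Finset.sum_congr rfl (fun i _ => inner i),
            Finset.sum_congr rfl (fun i _ => inner i),
            Finset.sum_add_distrib, Finset.sum_add_distrib]
  -- relate to the goal sum
  have hgoal_eq : ∑ q ∈ Finset.univ.filter (fun q : Fin n × Fin n => q.1 < q.2),
        (P q.1 q.2 / (Real.sqrt (P q.1 q.1) * Real.sqrt (P q.2 q.2))) ^ 2
      = ∑ q ∈ Finset.univ.filter (fun q : Fin n × Fin n => q.1 < q.2), F q.1 q.2 := by
    refine Finset.sum_congr rfl fun q hq => ?_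
    have hlt : q.1 < q.2 := (Finset.mem_filter.mp hq).2
    simp only [hF, if_neg (ne_of_lt hlt)]
    rw [div_pow, mul_pow, Real.sq_sqrt (hdiag q.1).le, Real.sq_sqrt (hdiag q.2).le]
  have hdouble : ∑ i, ∑ j, F i j
      = 2 * ∑ q ∈ Finset.univ.filter (fun q : Fin n × Fin n => q.1 < q.2), F q.1 q.2 := by
    have e1 : ∑ i, ∑ j, F i j = ∑ q ∈ (univ : Finset (Fin n × Fin n)), F q.1 q.2 := by
      rw [← Finset.univ_product_univ, Finset.sum_product]
    rw [e1, ← Finset.sum_filter_add_sum_filter_not (univ : Finset (Fin n × Fin n))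
      (fun q => q.1 < q.2) (fun q => F q.1 q.2)]
    have e2 : ∑ q ∈ (univ : Finset (Fin n × Fin n)).filter (fun q => ¬ q.1 < q.2), F q.1 q.2
        = ∑ q ∈ (univ : Finset (Fin n × Fin n)).filter (fun q => q.2 < q.1), F q.1 q.2 := by
      rw [← Finset.sum_filter_add_sum_filter_not
        ((univ : Finset (Fin n × Fin n)).filter (fun q => ¬ q.1 < q.2))
        (fun q => q.2 < q.1) (fun q => F q.1 q.2)]
      have e3 : ((univ : Finset (Fin n × Fin n)).filter (fun q => ¬ q.1 < q.2)).filter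
          (fun q => q.2 < q.1) = (univ : Finset (Fin n × Fin n)).filter (fun q => q.2 < q.1) := by
        rw [Finset.filter_filter]
        refine Finset.filter_congr fun q _ => ?_
        constructor
        · exact fun h => h.2
        · exact fun h => ⟨not_lt_of_gt h, h⟩
      have e4 : ∑ q ∈ ((univ : Finset (Fin n × Fin n)).filter (fun q => ¬ q.1 < q.2)).filter
          (fun q => ¬ q.2 < q.1), F q.1 q.2 = 0 := by
        refine Finset.sum_eq_zero fun q hq => ?_
        rw [Finset.mem_filter] at hq
        have hq2 := hq.2
        have hq1 := (Finset.mem_filter.mp hq.1).2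
        have : q.1 = q.2 := le_antisymm (not_lt.mp hq2) (not_lt.mp hq1)
        simp [hF, this]
      rw [e3, e4, add_zero]
    have e5 : ∑ q ∈ (univ : Finset (Fin n × Fin n)).filter (fun q => q.2 < q.1), F q.1 q.2
        = ∑ q ∈ (univ : Finset (Fin n × Fin n)).filter (fun q => q.1 < q.2), F q.1 q.2 := by
      refine Finset.sum_nbij' Prod.swap Prod.swap ?_ ?_ ?_ ?_ ?_
      · intro q hq
        simp only [Finset.mem_filter, Finset.mem_univ, true_and] at hq ⊢
        exact hq
      · intro q hq
        simp only [Finset.mem_filter, Finset.mem_univ, true_and] at hq ⊢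
        exact hq
      · intro q _; rfl
      · intro q _; rfl
      · intro q _
        exact hFsymm q.1 q.2
    rw [e2, e5]
    ring
  -- finish
  have hkn : (k : ℝ) ≤ n := by
    have : P.rank ≤ n := P.rank_le_width
    rw [hrank] at this
    exact_mod_cast this
  rw [hgoal_eq]
  nlinarith [hdouble, hTot, hB1, hB2, hB3, hB4, hst, hs0, ht0, hkn,
    mul_nonneg hs0 ht0]
end

section
/- Let X = (X_1, X_2) be a random vector in ℝ^a × ℝ^b and Y a random vector in ℝ^c, defined on a common probability space, such that X_2 = g(Y) almost surely for some measurable function g : ℝ^c → ℝ^b. Let λ denote Lebesgue measure (on the Euclidean space appropriate to the context). Assume: (i) for every measurable set U ⊆ ℝ^b, P(X_2 ∈ U) = 0 if and only if λ(U) = 0; and (ii) there is a regular conditional distribution κ of X_1 given Y such that for every y ∈ ℝ^c and every measurable U ⊆ ℝ^a, κ(y, U) = 0 if and only if λ(U) = 0. Then for every measurable set V ⊆ ℝ^a × ℝ^b, P(X ∈ V) = 0 if and only if λ(V) = 0. -/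
open MeasureTheory ProbabilityTheory

/-- Conditional density lemma: let `X = (X₁, X₂)` be a random vector in `ℝ^a × ℝ^b` and `Y`
a random vector in `ℝ^c`, with `X₂ = g(Y)` almost surely.  Suppose (i) the law of `X₂` and
Lebesgue measure are mutually absolutely continuous, and (ii) there is a regular conditional
distribution `κ` of `X₁` given `Y` such that for every `y`, `κ(y, ·)` and Lebesgue measure
are mutually absolutely continuous.  Then the law of `X` and Lebesgue measure on
`ℝ^a × ℝ^b` are mutually absolutely continuous. -/
theorem conditionalDensity (a b c : ℕ) {Ω : Type*} [MeasurableSpace Ω]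
    (P : Measure Ω) [IsProbabilityMeasure P]
    (X₁ : Ω → (Fin a → ℝ)) (X₂ : Ω → (Fin b → ℝ)) (Y : Ω → (Fin c → ℝ))
    (hX₁ : Measurable X₁) (hX₂ : Measurable X₂) (hY : Measurable Y)
    (g : (Fin c → ℝ) → (Fin b → ℝ)) (hg : Measurable g)
    (hX₂Y : ∀ᵐ ω ∂P, X₂ ω = g (Y ω))
    (hX₂dens : ∀ U : Set (Fin b → ℝ), MeasurableSet U →
      (P {ω | X₂ ω ∈ U} = 0 ↔ volume U = 0))
    (κ : Kernel (Fin c → ℝ) (Fin a → ℝ)) [IsMarkovKernel κ]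
    (hκ : ∀ U : Set (Fin a → ℝ), MeasurableSet U →
      ∀ B : Set (Fin c → ℝ), MeasurableSet B →
        P {ω | X₁ ω ∈ U ∧ Y ω ∈ B} = ∫⁻ y in B, κ y U ∂(Measure.map Y P))
    (hκdens : ∀ y, ∀ U : Set (Fin a → ℝ), MeasurableSet U → (κ y U = 0 ↔ volume U = 0)) :
    ∀ V : Set ((Fin a → ℝ) × (Fin b → ℝ)), MeasurableSet V →
      (P {ω | (X₁ ω, X₂ ω) ∈ V} = 0 ↔ volume V = 0) := by
  intro V hV
  set μ : Measure (Fin c → ℝ) := Measure.map Y P with hμ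
  have hYX₁ : Measurable fun ω => (Y ω, X₁ ω) := hY.prodMk hX₁
  -- the law of (Y, X₁) is μ ⊗ₘ κ
  have hlaw : Measure.map (fun ω => (Y ω, X₁ ω)) P = μ ⊗ₘ κ := by
    have : IsProbabilityMeasure μ := Measure.isProbabilityMeasure_map hY.aemeasurable
    refine ext_of_generate_finite _ generateFrom_prod.symm isPiSystem_prod ?_ ?_
    · rintro s ⟨B, hB, U, hU, rfl⟩
      simp only [Set.mem_setOf_eq] at hB hU
      rw [Measure.map_apply hYX₁ (hB.prod hU),
        Measure.compProd_apply_prod hB hU, ← hκ U hU B hB]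
      congr 1
      ext ω
      simp [Set.mem_prod, and_comm]
    · rw [Measure.map_apply hYX₁ MeasurableSet.univ]
      simp
  -- the set W
  set W : Set ((Fin c → ℝ) × (Fin a → ℝ)) := {p | (p.2, g p.1) ∈ V} with hW
  have hWm : MeasurableSet W :=
    (measurable_snd.prodMk (hg.comp measurable_fst)) hV
  have hsec : ∀ y, Prod.mk y ⁻¹' W = {x | (x, g y) ∈ V} := fun y => rfl
  have hsec_m : ∀ y : Fin c → ℝ, MeasurableSet {x | (x, g y) ∈ V} := fun y =>
    (measurable_id.prodMk measurable_const) hV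
  -- P {X ∈ V} = ∫ κ y (section of g y) dμ
  have key : P {ω | (X₁ ω, X₂ ω) ∈ V} = ∫⁻ y, κ y {x | (x, g y) ∈ V} ∂μ := by
    have h1 : P {ω | (X₁ ω, X₂ ω) ∈ V} = P {ω | (Y ω, X₁ ω) ∈ W} := by
      apply measure_congr
      filter_upwards [hX₂Y] with ω hω
      change ((X₁ ω, X₂ ω) ∈ V) = ((X₁ ω, g (Y ω)) ∈ V)
      rw [hω]
    have h2 : {ω | (Y ω, X₁ ω) ∈ W} = (fun ω => (Y ω, X₁ ω)) ⁻¹' W := rfl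
    rw [h1, h2, ← Measure.map_apply hYX₁ hWm, hlaw, Measure.compProd_apply hWm]
    rfl
  rw [key]
  -- sections measurability
  have hκsec : Measurable fun y => κ y {x | (x, g y) ∈ V} := by
    have := Kernel.measurable_kernel_prodMk_left (κ := κ) hWm
    simpa [hsec] using this
  have hvolsec : Measurable fun x₂ : Fin b → ℝ => volume ((fun x => (x, x₂)) ⁻¹' V) :=
    measurable_measure_prodMk_right (μ := (volume : Measure (Fin a → ℝ))) hV
  -- N : set of x₂ with null section
  set N : Set (Fin b → ℝ) := {x₂ | volume ((fun x => (x, x₂)) ⁻¹' V) = 0} with hN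
  have hNm : MeasurableSet N := hvolsec (measurableSet_singleton 0)
  -- chain of equivalences
  rw [lintegral_eq_zero_iff hκsec]
  simp only [Filter.EventuallyEq, Pi.zero_apply]
  have step1 : (∀ᵐ y ∂μ, κ y {x | (x, g y) ∈ V} = 0) ↔ ∀ᵐ y ∂μ, g y ∈ N := by
    refine Filter.eventually_congr (Filter.Eventually.of_forall fun y => ?_)
    rw [hκdens y _ (hsec_m y)]; rfl
  rw [step1]
  have step2 : (∀ᵐ y ∂μ, g y ∈ N) ↔ ∀ᵐ ω ∂P, g (Y ω) ∈ N := by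
    rw [hμ, ae_map_iff hY.aemeasurable (hg hNm)]
  rw [step2]
  have step3 : (∀ᵐ ω ∂P, g (Y ω) ∈ N) ↔ ∀ᵐ ω ∂P, X₂ ω ∈ N := by
    constructor <;> intro h <;> filter_upwards [h, hX₂Y] with ω h1 h2
    · rw [h2]; exact h1
    · rw [← h2]; exact h1
  rw [step3]
  have step4 : (∀ᵐ ω ∂P, X₂ ω ∈ N) ↔ P {ω | X₂ ω ∈ Nᶜ} = 0 := by
    rw [ae_iff]
    constructor <;> intro h <;> convert h using 2 <;> ext ω <;> simp
  rw [step4, hX₂dens _ (hNm.compl)]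
  have step5 : volume Nᶜ = 0 ↔ ∀ᵐ x₂, x₂ ∈ N := by
    rw [ae_iff]
    constructor <;> intro h <;> convert h using 2 <;> ext x₂ <;> simp
  rw [step5]
  have step6 : (∀ᵐ x₂, x₂ ∈ N) ↔ volume V = 0 := by
    have hprod : (volume : Measure ((Fin a → ℝ) × (Fin b → ℝ)))
        = (volume : Measure (Fin a → ℝ)).prod volume := Measure.volume_eq_prod _ _
    rw [hprod, Measure.prod_apply_symm hV, lintegral_eq_zero_iff hvolsec, Filter.EventuallyEq]
    simp only [Pi.zero_apply]
    rfl
  rw [step6]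
end

section
/- Fix an integer m ≥ 1, an integer p ≥ 1, and a constant C > 0. Let ψ : ℝ^m → ℝ be measurable with |ψ(x)| ≤ C · ∑_{i=1}^m |x_i|^p + C for all x ∈ ℝ^m. Fix a = (a_1, …, a_{m−1}) ∈ ℝ^{m−1}, and for w ∈ ℝ and τ² > 0 define Ψ(w; τ²) := E_{z∼N(0,1)}[ψ(a_1, …, a_{m−1}, w + τ z)]. Then there exists a constant R > 0, depending only on p and C, such that for all w, Δw ∈ ℝ, all τ² > 0, and all Δτ² ≥ 0: |Ψ(w + Δw; τ² + Δτ²) − Ψ(w; τ²)| ≤ R · (|Δw| + Δτ²) · (1 + τ^{−2}) · (S + |w|^p + |Δw|^p + τ^p + (Δτ²)^{p/2}), where S := 1 + |a_1|^p + ⋯ + |a_{m−1}|^p. -/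
set_option maxHeartbeats 4000000

open MeasureTheory ProbabilityTheory Real
open scoped NNReal ENNReal

lemma abs_pow_le_one_add (x : ℝ) {k N : ℕ} (h : k ≤ N) : |x| ^ k ≤ 1 + |x| ^ N := by
  rcases le_total |x| 1 with hx | hx
  · have : |x| ^ k ≤ 1 := pow_le_one₀ (abs_nonneg x) hx
    have hN : 0 ≤ |x| ^ N := pow_nonneg (abs_nonneg x) N
    linarith
  · have : |x| ^ k ≤ |x| ^ N := pow_le_pow_right₀ hx h
    linarith

lemma pow_add_le' {x y : ℝ} (hx : 0 ≤ x) (hy : 0 ≤ y) (p : ℕ) :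
    (x + y) ^ p ≤ 2 ^ p * (x ^ p + y ^ p) := by
  have h1 : x + y ≤ 2 * max x y := by
    rcases le_total x y with h | h
    · simp [max_eq_right h]; linarith
    · simp [max_eq_left h]; linarith
  have h2 : (x + y) ^ p ≤ (2 * max x y) ^ p :=
    pow_le_pow_left₀ (by linarith) h1 p
  have h3 : (2 * max x y) ^ p = 2 ^ p * (max x y) ^ p := mul_pow 2 _ p
  have h4 : (max x y) ^ p ≤ x ^ p + y ^ p := by
    rcases le_total x y with h | h
    · rw [max_eq_right h]; exact le_add_of_nonneg_left (pow_nonneg hx p)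
    · rw [max_eq_left h]; exact le_add_of_nonneg_right (pow_nonneg hy p)
  calc (x + y) ^ p ≤ 2 ^ p * (max x y) ^ p := by rw [← h3]; exact h2
    _ ≤ 2 ^ p * (x ^ p + y ^ p) := by
        have : (0:ℝ) ≤ 2 ^ p := by positivity
        nlinarith

lemma integrable_abs_pow_mul_gauss (n : ℕ) {b : ℝ} (hb : 0 < b) :
    Integrable (fun x : ℝ => |x| ^ n * Real.exp (-b * x ^ 2)) := by
  have key : ∀ x : ℝ, |x| ^ n * Real.exp (-b * x ^ 2)
      ≤ Real.exp ((n:ℝ)^2 / (2*b)) * Real.exp (-(b/2) * x ^ 2) := by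
    intro x
    have h1 : |x| ≤ Real.exp |x| := by
      have := Real.add_one_le_exp |x|; linarith
    have h2 : |x| ^ n ≤ Real.exp ((n:ℝ) * |x|) := by
      calc |x| ^ n ≤ (Real.exp |x|) ^ n := pow_le_pow_left₀ (abs_nonneg x) h1 n
        _ = Real.exp ((n:ℝ) * |x|) := by rw [← Real.exp_nat_mul]
    have hb' : (0:ℝ) < 2*b := by linarith
    have key0 : 2*b*((n:ℝ)*|x|) ≤ (n:ℝ)^2 + b^2*x^2 := by
      nlinarith [sq_nonneg (b*|x| - (n:ℝ)), sq_abs x]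
    have hc : (n:ℝ)^2/(2*b)*(2*b) = (n:ℝ)^2 := div_mul_cancel₀ _ (ne_of_gt hb')
    have h5 : (n:ℝ)*|x| ≤ (n:ℝ)^2/(2*b) + (b/2)*x^2 := by
      rw [← mul_le_mul_iff_of_pos_right hb']
      nlinarith [key0, hc]
    have h3 : (n:ℝ) * |x| + (-b * x ^ 2) ≤ (n:ℝ)^2 / (2*b) + (-(b/2) * x ^ 2) := by linarith
    calc |x| ^ n * Real.exp (-b * x ^ 2) ≤ Real.exp ((n:ℝ) * |x|) * Real.exp (-b * x ^ 2) := by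
          apply mul_le_mul_of_nonneg_right h2 (Real.exp_pos _).le
      _ = Real.exp ((n:ℝ) * |x| + (-b * x ^ 2)) := by rw [Real.exp_add]
      _ ≤ Real.exp ((n:ℝ)^2 / (2*b) + (-(b/2) * x ^ 2)) := Real.exp_le_exp.mpr h3
      _ = Real.exp ((n:ℝ)^2 / (2*b)) * Real.exp (-(b/2) * x ^ 2) := Real.exp_add _ _
  refine Integrable.mono' (((integrable_exp_neg_mul_sq (by linarith : 0 < b/2)).const_mul
    (Real.exp ((n:ℝ)^2 / (2*b))))) ?_ ?_
  · exact ((measurable_abs.pow_const n).mul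
      (((measurable_id.pow_const 2).const_mul (-b)).exp)).aestronglyMeasurable
  · filter_upwards with x
    rw [Real.norm_eq_abs, abs_of_nonneg (by positivity)]
    exact key x

lemma integrable_one_add_abs_pow_mul_gauss (n : ℕ) {b : ℝ} (hb : 0 < b) (w : ℝ) :
    Integrable (fun y : ℝ => (1 + |y - w|) ^ n * Real.exp (-b * (y - w) ^ 2)) := by
  have base : Integrable (fun x : ℝ => (1 + |x|) ^ n * Real.exp (-b * x ^ 2)) := by
    refine Integrable.mono' (((integrable_exp_neg_mul_sq hb).const_mul ((2:ℝ) ^ n)).add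
      ((integrable_abs_pow_mul_gauss n hb).const_mul ((2:ℝ) ^ n))) ?_ ?_
    · exact (((measurable_abs.const_add 1).pow_const n).mul
        (((measurable_id.pow_const 2).const_mul (-b)).exp)).aestronglyMeasurable
    · filter_upwards with x
      rw [Real.norm_eq_abs, abs_of_nonneg (by positivity)]
      have h1 : (1 + |x|) ^ n ≤ 2 ^ n * (1 ^ n + |x| ^ n) := pow_add_le' one_pos.le (abs_nonneg x) n
      have h2 : (0:ℝ) < Real.exp (-b * x ^ 2) := Real.exp_pos _
      calc (1 + |x|) ^ n * Real.exp (-b * x ^ 2)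
          ≤ (2 ^ n * (1 + |x| ^ n)) * Real.exp (-b * x ^ 2) := by
            apply mul_le_mul_of_nonneg_right _ h2.le
            simpa using h1
        _ = 2 ^ n * Real.exp (-b * x ^ 2) + 2 ^ n * (|x| ^ n * Real.exp (-b * x ^ 2)) := by ring
  exact base.comp_sub_right w

lemma integrable_abs_pow_gaussianReal (n : ℕ) :
    Integrable (fun z : ℝ => |z| ^ n) (gaussianReal 0 1) := by
  rw [gaussianReal_of_var_ne_zero 0 one_ne_zero]
  rw [integrable_withDensity_iff (measurable_gaussianPDF 0 1)
    (Filter.Eventually.of_forall fun x => ENNReal.ofReal_lt_top)]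
  refine Integrable.mono' ((integrable_abs_pow_mul_gauss n (by norm_num : (0:ℝ) < 1/2)))
    ?_ ?_
  · exact ((measurable_abs.pow_const n).mul
      ((measurable_gaussianPDF 0 1).ennreal_toReal)).aestronglyMeasurable
  · filter_upwards with x
    have hpdf : (gaussianPDF 0 1 x).toReal = gaussianPDFReal 0 1 x :=
      ENNReal.toReal_ofReal (gaussianPDFReal_nonneg 0 1 x)
    rw [Real.norm_eq_abs, hpdf]
    have hnn : 0 ≤ gaussianPDFReal 0 1 x := gaussianPDFReal_nonneg 0 1 x
    rw [abs_of_nonneg (by positivity)]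
    have hpdf2 : gaussianPDFReal 0 1 x ≤ Real.exp (-(1/2) * x^2) := by
      unfold gaussianPDFReal
      simp only [NNReal.coe_one, mul_one]
      have h1 : (Real.sqrt (2 * π))⁻¹ ≤ 1 := by
        apply inv_le_one_of_one_le₀
        rw [show (1:ℝ) = Real.sqrt 1 by simp]
        exact Real.sqrt_le_sqrt (by nlinarith [Real.pi_gt_three])
      have h2 : -(x-0)^2/2 = -(1/2)*x^2 := by ring
      rw [h2]
      calc (Real.sqrt (2*π))⁻¹ * Real.exp (-(1/2)*x^2) ≤ 1 * Real.exp (-(1/2)*x^2) :=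
            mul_le_mul_of_nonneg_right h1 (Real.exp_pos _).le
        _ = Real.exp (-(1/2)*x^2) := one_mul _
    exact mul_le_mul_of_nonneg_left hpdf2 (by positivity)


lemma gauss_CoV (φ : ℝ → ℝ) (hφ : Measurable φ) (μ0 v : ℝ) (hv : 0 < v) :
    ∫ z, φ (μ0 + Real.sqrt v * z) ∂gaussianReal 0 1
      = ∫ y, φ y * ((Real.sqrt (2 * π * v))⁻¹ * Real.exp (-(y - μ0) ^ 2 / (2 * v))) := by
  have hvt : ((v.toNNReal : ℝ≥0) : ℝ) = v := Real.coe_toNNReal v hv.le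
  have hvne : v.toNNReal ≠ 0 := by
    simp only [ne_eq, Real.toNNReal_eq_zero, not_le]
    exact hv
  have hmap1 : (gaussianReal 0 1).map (fun z => Real.sqrt v * z) = gaussianReal 0 v.toNNReal := by
    have h := gaussianReal_map_const_mul (μ := 0) (v := 1) (Real.sqrt v)
    have heq : (fun z : ℝ => Real.sqrt v * z) = (Real.sqrt v * ·) := rfl
    rw [heq, h, mul_zero]
    congr 1
    ext
    simp [Real.sq_sqrt hv.le, hv.le]
  have hmap2 : (gaussianReal 0 1).map (fun z => μ0 + Real.sqrt v * z)
      = gaussianReal μ0 v.toNNReal := by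
    have hco : (fun z : ℝ => μ0 + Real.sqrt v * z)
        = (μ0 + ·) ∘ (fun z => Real.sqrt v * z) := rfl
    rw [hco, ← Measure.map_map (measurable_const_add μ0) (measurable_const_mul _), hmap1,
      gaussianReal_map_const_add, zero_add]
  have step1 : ∫ z, φ (μ0 + Real.sqrt v * z) ∂gaussianReal 0 1
      = ∫ y, φ y ∂gaussianReal μ0 v.toNNReal := by
    rw [← hmap2]
    exact (integral_map (by fun_prop) hφ.aestronglyMeasurable).symm
  rw [step1, gaussianReal_of_var_ne_zero μ0 hvne]
  have hwd : volume.withDensity (gaussianPDF μ0 v.toNNReal)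
      = volume.withDensity (fun y => ((gaussianPDFReal μ0 v.toNNReal y).toNNReal : ℝ≥0∞)) := rfl
  rw [hwd, integral_withDensity_eq_integral_smul
    ((measurable_gaussianPDFReal μ0 v.toNNReal).real_toNNReal)]
  apply integral_congr_ae
  filter_upwards with y
  show (gaussianPDFReal μ0 v.toNNReal y).toNNReal • φ y = _
  rw [NNReal.smul_def, smul_eq_mul,
    Real.coe_toNNReal _ (gaussianPDFReal_nonneg μ0 v.toNNReal y), mul_comm]
  unfold gaussianPDFReal
  rw [hvt]

lemma hasDerivAt_gpdf (w dw t dt y θ : ℝ) (hv : 0 < t + θ * dt) :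
    HasDerivAt (fun s => (Real.sqrt (2 * π * (t + s * dt)))⁻¹ *
        Real.exp (-(y - (w + s * dw)) ^ 2 / (2 * (t + s * dt))))
      ((Real.sqrt (2 * π * (t + θ * dt)))⁻¹ *
          Real.exp (-(y - (w + θ * dw)) ^ 2 / (2 * (t + θ * dt))) *
        (-(dt / (2 * (t + θ * dt))) + dw * (y - (w + θ * dw)) / (t + θ * dt) +
          dt * (y - (w + θ * dw)) ^ 2 / (2 * (t + θ * dt) ^ 2))) θ := by
  have hπ : 0 < π := Real.pi_pos
  have hc : 0 < 2 * π * (t + θ * dt) := by positivity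
  have hsqpos : 0 < Real.sqrt (2 * π * (t + θ * dt)) := Real.sqrt_pos.mpr hc
  have hv' : HasDerivAt (fun s : ℝ => t + s * dt) dt θ := by
    simpa using ((hasDerivAt_id θ).mul_const dt).const_add t
  have hc' : HasDerivAt (fun s : ℝ => 2 * π * (t + s * dt)) (2 * π * dt) θ := by
    simpa [mul_comm] using hv'.const_mul (2 * π)
  have hs' : HasDerivAt (fun s : ℝ => Real.sqrt (2 * π * (t + s * dt)))
      (1 / (2 * Real.sqrt (2 * π * (t + θ * dt))) * (2 * π * dt)) θ :=
    (Real.hasDerivAt_sqrt hc.ne').comp θ hc'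
  have hA1 : HasDerivAt (fun s : ℝ => (Real.sqrt (2 * π * (t + s * dt)))⁻¹)
      (-(1 / (2 * Real.sqrt (2 * π * (t + θ * dt))) * (2 * π * dt)) /
        (Real.sqrt (2 * π * (t + θ * dt))) ^ 2) θ := hs'.inv hsqpos.ne'
  have hu : HasDerivAt (fun s : ℝ => y - (w + s * dw)) (-dw) θ := by
    simpa using (((hasDerivAt_id θ).mul_const dw).const_add w).const_sub y
  have hnum : HasDerivAt (fun s : ℝ => -(y - (w + s * dw)) ^ 2)
      (-(2 * (y - (w + θ * dw)) ^ 1 * (-dw))) θ := (hu.pow 2).neg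
  have hden : HasDerivAt (fun s : ℝ => 2 * (t + s * dt)) (2 * dt) θ := by
    simpa [mul_comm] using hv'.const_mul 2
  have hE : HasDerivAt (fun s : ℝ => -(y - (w + s * dw)) ^ 2 / (2 * (t + s * dt)))
      (((-(2 * (y - (w + θ * dw)) ^ 1 * (-dw))) * (2 * (t + θ * dt)) -
          (-(y - (w + θ * dw)) ^ 2) * (2 * dt)) / (2 * (t + θ * dt)) ^ 2) θ :=
    hnum.div hden (by positivity)
  have hA2 : HasDerivAt (fun s : ℝ => Real.exp (-(y - (w + s * dw)) ^ 2 / (2 * (t + s * dt))))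
      (Real.exp (-(y - (w + θ * dw)) ^ 2 / (2 * (t + θ * dt))) *
        (((-(2 * (y - (w + θ * dw)) ^ 1 * (-dw))) * (2 * (t + θ * dt)) -
          (-(y - (w + θ * dw)) ^ 2) * (2 * dt)) / (2 * (t + θ * dt)) ^ 2)) θ := hE.exp
  have hmul := hA1.mul hA2
  refine hmul.congr_deriv ?_
  have hsq : (Real.sqrt (2 * π * (t + θ * dt))) ^ 2 = 2 * π * (t + θ * dt) :=
    Real.sq_sqrt hc.le
  rw [hsq]
  field_simp
  ring


lemma qint : ∀ p : ℕ, Integrable (fun z : ℝ => (1 + |z| ^ p) * (1 + |z| + z ^ 2)) (gaussianReal 0 1) := by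
  intro p
  have hmeas : Measurable (fun z : ℝ => (1 + |z| ^ p) * (1 + |z| + z ^ 2)) :=
    ((measurable_abs.pow_const p).const_add 1).mul
      (((measurable_abs.const_add 1).add (measurable_id.pow_const 2)))
  refine Integrable.mono' (((integrable_const (1:ℝ)).add
    (integrable_abs_pow_gaussianReal (p+2))).const_mul 6) hmeas.aestronglyMeasurable ?_
  filter_upwards with z
  have h0 : (0:ℝ) ≤ |z| := abs_nonneg z
  have hnn : 0 ≤ (1 + |z| ^ p) * (1 + |z| + z ^ 2) := by positivity
  rw [Real.norm_eq_abs, abs_of_nonneg hnn]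
  have e : (1 + |z| ^ p) * (1 + |z| + z ^ 2)
      = 1 + |z| + z ^ 2 + |z| ^ p + |z| ^ p * |z| + |z| ^ p * z ^ 2 := by ring
  have e1 : |z| ^ p * |z| = |z| ^ (p+1) := (pow_succ _ _).symm
  have e2 : |z| ^ p * z ^ 2 = |z| ^ (p+2) := by
    rw [← sq_abs z, ← pow_add]
  rw [e, e1, e2]
  simp only [Pi.add_apply]
  have a1 : |z| ^ 1 ≤ 1 + |z| ^ (p+2) := abs_pow_le_one_add z (by omega)
  rw [pow_one] at a1
  have a2 : |z| ^ 2 ≤ 1 + |z| ^ (p+2) := abs_pow_le_one_add z (by omega)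
  rw [sq_abs] at a2
  have a3 : |z| ^ p ≤ 1 + |z| ^ (p+2) := abs_pow_le_one_add z (by omega)
  have a4 : |z| ^ (p+1) ≤ 1 + |z| ^ (p+2) := abs_pow_le_one_add z (by omega)
  have a5 : |z| ^ (p+2) ≤ 1 + |z| ^ (p+2) := abs_pow_le_one_add z (by omega)
  linarith


lemma La (p : ℕ) (C A w : ℝ) (hC : 0 < C) (hA0 : 0 ≤ A) (y : ℝ) :
    C * (A + |y| ^ p) ≤ (C * (A + 2 ^ p * |w| ^ p + 2 ^ p)) * (1 + |y - w|) ^ p := by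
  have hy : |y| ≤ |w| + |y - w| := by
    have h0 : y = w + (y - w) := by ring
    calc |y| = |w + (y - w)| := by rw [← h0]
      _ ≤ |w| + |y - w| := abs_add_le _ _
  have h1 : |y| ^ p ≤ 2 ^ p * (|w| ^ p + |y - w| ^ p) :=
    le_trans (pow_le_pow_left₀ (abs_nonneg y) hy p)
      (pow_add_le' (abs_nonneg w) (abs_nonneg _) p)
  have hP1 : (1:ℝ) ≤ (1 + |y - w|) ^ p :=
    one_le_pow₀ (by linarith [abs_nonneg (y - w)])
  have hP2 : |y - w| ^ p ≤ (1 + |y - w|) ^ p :=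
    pow_le_pow_left₀ (abs_nonneg _) (by linarith [abs_nonneg (y - w)]) p
  have hcore : A + |y| ^ p ≤ (A + 2 ^ p * |w| ^ p + 2 ^ p) * (1 + |y - w|) ^ p := by
    have l1 : A ≤ A * (1 + |y - w|) ^ p := le_mul_of_one_le_right hA0 hP1
    have l2 : (2:ℝ) ^ p * |w| ^ p ≤ 2 ^ p * |w| ^ p * (1 + |y - w|) ^ p :=
      le_mul_of_one_le_right (by positivity) hP1
    have l3 : (2:ℝ) ^ p * |y - w| ^ p ≤ 2 ^ p * (1 + |y - w|) ^ p :=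
      mul_le_mul_of_nonneg_left hP2 (by positivity)
    nlinarith [l1, l2, l3, h1]
  calc C * (A + |y| ^ p)
      ≤ C * ((A + 2 ^ p * |w| ^ p + 2 ^ p) * (1 + |y - w|) ^ p) :=
        mul_le_mul_of_nonneg_left hcore hC.le
    _ = (C * (A + 2 ^ p * |w| ^ p + 2 ^ p)) * (1 + |y - w|) ^ p := by ring

lemma Lb (w Δw t dt θ y : ℝ) (ht : 0 < t) (hdt : 0 ≤ dt)
    (h1 : t / 2 ≤ t + θ * dt) (h2 : t + θ * dt ≤ 2 * (t + dt)) (h3 : |θ * Δw| ≤ 2 * |Δw|) :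
    (Real.sqrt (2 * π * (t + θ * dt)))⁻¹ *
      Real.exp (-(y - (w + θ * Δw)) ^ 2 / (2 * (t + θ * dt)))
    ≤ ((Real.sqrt (π * t))⁻¹ * Real.exp (4 * Δw ^ 2 / t)) *
      Real.exp (-(1 / (8 * (t + dt))) * (y - w) ^ 2) := by
  have hπ := Real.pi_pos
  have hv : 0 < t + θ * dt := by linarith
  have hsle : Real.sqrt (π * t) ≤ Real.sqrt (2 * π * (t + θ * dt)) :=
    Real.sqrt_le_sqrt (by nlinarith)
  have hspos : 0 < Real.sqrt (π * t) := Real.sqrt_pos.mpr (by positivity)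
  have hinv : (Real.sqrt (2 * π * (t + θ * dt)))⁻¹ ≤ (Real.sqrt (π * t))⁻¹ :=
    inv_anti₀ hspos hsle
  have hd2 : (θ * Δw) ^ 2 ≤ 4 * Δw ^ 2 := by
    have h4 := mul_self_le_mul_self (abs_nonneg (θ * Δw)) h3
    nlinarith [sq_abs (θ * Δw), sq_abs Δw, h4]
  have hu2 : (y - w) ^ 2 / 2 - 4 * Δw ^ 2 ≤ (y - (w + θ * Δw)) ^ 2 := by
    nlinarith [sq_nonneg ((y - (w + θ * Δw)) - θ * Δw), hd2]
  have hexp : -(y - (w + θ * Δw)) ^ 2 / (2 * (t + θ * dt))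
      ≤ 4 * Δw ^ 2 / t + (-(1 / (8 * (t + dt))) * (y - w) ^ 2) := by
    have e1 : -(y - (w + θ * Δw)) ^ 2 / (2 * (t + θ * dt))
        ≤ (4 * Δw ^ 2 - (y - w) ^ 2 / 2) / (2 * (t + θ * dt)) := by
      rw [div_le_div_iff₀ (by positivity) (by positivity)]
      nlinarith [hu2, hv]
    have s1 : 4 * Δw ^ 2 / (2 * (t + θ * dt)) ≤ 4 * Δw ^ 2 / t := by
      rw [div_le_div_iff₀ (by positivity) ht]
      nlinarith [sq_nonneg Δw, h1]
    have s2 : (y - w) ^ 2 / (8 * (t + dt)) ≤ (y - w) ^ 2 / (4 * (t + θ * dt)) := by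
      rw [div_le_div_iff₀ (by positivity) (by positivity)]
      nlinarith [sq_nonneg (y - w), h2]
    have e3 : (4 * Δw ^ 2 - (y - w) ^ 2 / 2) / (2 * (t + θ * dt))
        = 4 * Δw ^ 2 / (2 * (t + θ * dt)) - (y - w) ^ 2 / (4 * (t + θ * dt)) := by
      field_simp
      ring
    have e4 : -(1 / (8 * (t + dt))) * (y - w) ^ 2 = -((y - w) ^ 2 / (8 * (t + dt))) := by
      ring
    rw [e4]
    rw [e3] at e1
    linarith
  calc (Real.sqrt (2 * π * (t + θ * dt)))⁻¹ *
        Real.exp (-(y - (w + θ * Δw)) ^ 2 / (2 * (t + θ * dt)))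
      ≤ (Real.sqrt (π * t))⁻¹ *
        Real.exp (-(y - (w + θ * Δw)) ^ 2 / (2 * (t + θ * dt))) :=
        mul_le_mul_of_nonneg_right hinv (Real.exp_pos _).le
    _ ≤ (Real.sqrt (π * t))⁻¹ *
        Real.exp (4 * Δw ^ 2 / t + (-(1 / (8 * (t + dt))) * (y - w) ^ 2)) :=
        mul_le_mul_of_nonneg_left (Real.exp_le_exp.mpr hexp) (by positivity)
    _ = ((Real.sqrt (π * t))⁻¹ * Real.exp (4 * Δw ^ 2 / t)) *
        Real.exp (-(1 / (8 * (t + dt))) * (y - w) ^ 2) := by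
        rw [Real.exp_add]; ring

lemma Lhabs (w Δw t dt θ y : ℝ) (hdt : 0 ≤ dt) (hv : 0 < t + θ * dt) :
    |(-(dt / (2 * (t + θ * dt))) + Δw * (y - (w + θ * Δw)) / (t + θ * dt) +
      dt * (y - (w + θ * Δw)) ^ 2 / (2 * (t + θ * dt) ^ 2))|
    ≤ dt / (2 * (t + θ * dt)) + |Δw| * |y - (w + θ * Δw)| / (t + θ * dt) +
      dt * (y - (w + θ * Δw)) ^ 2 / (2 * (t + θ * dt) ^ 2) := by
  refine le_trans (abs_add_le _ _) ?_
  have t1 : |(-(dt / (2 * (t + θ * dt))) + Δw * (y - (w + θ * Δw)) / (t + θ * dt))|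
      ≤ dt / (2 * (t + θ * dt)) + |Δw| * |y - (w + θ * Δw)| / (t + θ * dt) := by
    refine le_trans (abs_add_le _ _) ?_
    apply add_le_add
    · rw [abs_neg, abs_of_nonneg (div_nonneg hdt (by positivity))]
    · rw [abs_div, abs_mul, abs_of_pos hv]
  have t2 : |dt * (y - (w + θ * Δw)) ^ 2 / (2 * (t + θ * dt) ^ 2)|
      = dt * (y - (w + θ * Δw)) ^ 2 / (2 * (t + θ * dt) ^ 2) :=
    abs_of_nonneg (div_nonneg (mul_nonneg hdt (sq_nonneg _)) (by positivity))
  rw [t2]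
  exact add_le_add t1 le_rfl

lemma Lc (w Δw t dt θ y : ℝ) (ht : 0 < t) (hdt : 0 ≤ dt)
    (h1 : t / 2 ≤ t + θ * dt) (h3 : |θ * Δw| ≤ 2 * |Δw|) :
    dt / (2 * (t + θ * dt)) + |Δw| * |y - (w + θ * Δw)| / (t + θ * dt) +
      dt * (y - (w + θ * Δw)) ^ 2 / (2 * (t + θ * dt) ^ 2)
    ≤ (2 * dt / t + 2 * |Δw| * (1 + 2 * |Δw|) / t + 2 * dt * (1 + 2 * |Δw|) ^ 2 / t ^ 2) *
      (1 + |y - w|) ^ 2 := by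
  have hv : 0 < t + θ * dt := by linarith
  have hY : (1:ℝ) ≤ 1 + |y - w| := by linarith [abs_nonneg (y - w)]
  have hY0 : (0:ℝ) ≤ 1 + |y - w| := by linarith
  have hP1 : (1:ℝ) ≤ (1 + |y - w|) ^ 2 := one_le_pow₀ hY
  have hu : |y - (w + θ * Δw)| ≤ (1 + 2 * |Δw|) * (1 + |y - w|) := by
    have h0 : y - (w + θ * Δw) = (y - w) + (-(θ * Δw)) := by ring
    calc |y - (w + θ * Δw)| = |(y - w) + (-(θ * Δw))| := by rw [← h0]
      _ ≤ |y - w| + |(-(θ * Δw))| := abs_add_le _ _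
      _ = |y - w| + |θ * Δw| := by rw [abs_neg]
      _ ≤ |y - w| + 2 * |Δw| := by linarith
      _ ≤ (1 + 2 * |Δw|) * (1 + |y - w|) := by nlinarith [abs_nonneg (y - w), abs_nonneg Δw]
  have hu2 : (y - (w + θ * Δw)) ^ 2 ≤ (1 + 2 * |Δw|) ^ 2 * (1 + |y - w|) ^ 2 := by
    have h5 := pow_le_pow_left₀ (abs_nonneg _) hu 2
    rw [sq_abs, mul_pow] at h5
    exact h5
  have c1 : dt / (2 * (t + θ * dt)) ≤ (2 * dt / t) * (1 + |y - w|) ^ 2 := by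
    have c1a : dt / (2 * (t + θ * dt)) ≤ 2 * dt / t := by
      rw [div_le_div_iff₀ (by positivity) ht]
      nlinarith [hdt, h1]
    calc dt / (2 * (t + θ * dt)) ≤ 2 * dt / t := c1a
      _ ≤ (2 * dt / t) * (1 + |y - w|) ^ 2 :=
        le_mul_of_one_le_right (div_nonneg (by linarith) ht.le) hP1
  have c2 : |Δw| * |y - (w + θ * Δw)| / (t + θ * dt)
      ≤ (2 * |Δw| * (1 + 2 * |Δw|) / t) * (1 + |y - w|) ^ 2 := by
    have e : (2 * |Δw| * (1 + 2 * |Δw|) / t) * (1 + |y - w|) ^ 2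
        = (2 * |Δw| * (1 + 2 * |Δw|) * (1 + |y - w|) ^ 2) / t := by ring
    rw [e, div_le_div_iff₀ hv ht]
    have hX0 : (0:ℝ) ≤ |Δw| * ((1 + 2 * |Δw|) * (1 + |y - w|)) :=
      mul_nonneg (abs_nonneg _) (mul_nonneg (by positivity) hY0)
    have m1 : |Δw| * |y - (w + θ * Δw)| * t ≤ |Δw| * ((1 + 2 * |Δw|) * (1 + |y - w|)) * t :=
      mul_le_mul_of_nonneg_right (mul_le_mul_of_nonneg_left hu (abs_nonneg Δw)) ht.le
    have m2 : |Δw| * ((1 + 2 * |Δw|) * (1 + |y - w|)) * t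
        ≤ |Δw| * ((1 + 2 * |Δw|) * (1 + |y - w|)) * (2 * (t + θ * dt)) :=
      mul_le_mul_of_nonneg_left (by linarith) hX0
    have hYY : (1 + |y - w|) ≤ (1 + |y - w|) ^ 2 := by nlinarith [hY]
    have m3 : |Δw| * ((1 + 2 * |Δw|) * (1 + |y - w|)) * (2 * (t + θ * dt))
        ≤ 2 * |Δw| * (1 + 2 * |Δw|) * (1 + |y - w|) ^ 2 * (t + θ * dt) := by
      nlinarith [hYY, mul_nonneg (mul_nonneg (abs_nonneg Δw)
        (by positivity : (0:ℝ) ≤ 1 + 2 * |Δw|)) hv.le]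
    linarith
  have c3 : dt * (y - (w + θ * Δw)) ^ 2 / (2 * (t + θ * dt) ^ 2)
      ≤ (2 * dt * (1 + 2 * |Δw|) ^ 2 / t ^ 2) * (1 + |y - w|) ^ 2 := by
    have e : (2 * dt * (1 + 2 * |Δw|) ^ 2 / t ^ 2) * (1 + |y - w|) ^ 2
        = (2 * dt * (1 + 2 * |Δw|) ^ 2 * (1 + |y - w|) ^ 2) / t ^ 2 := by ring
    rw [e, div_le_div_iff₀ (by positivity) (by positivity)]
    have n1 : dt * (y - (w + θ * Δw)) ^ 2
        ≤ dt * ((1 + 2 * |Δw|) ^ 2 * (1 + |y - w|) ^ 2) :=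
      mul_le_mul_of_nonneg_left hu2 hdt
    have n2 : t ^ 2 ≤ 4 * (t + θ * dt) ^ 2 := by
      nlinarith [mul_nonneg (by linarith : (0:ℝ) ≤ 2 * (t + θ * dt) - t)
        (by linarith : (0:ℝ) ≤ 2 * (t + θ * dt) + t)]
    have m1 : dt * (y - (w + θ * Δw)) ^ 2 * t ^ 2
        ≤ dt * ((1 + 2 * |Δw|) ^ 2 * (1 + |y - w|) ^ 2) * t ^ 2 :=
      mul_le_mul_of_nonneg_right n1 (sq_nonneg t)
    have m2 : dt * ((1 + 2 * |Δw|) ^ 2 * (1 + |y - w|) ^ 2) * t ^ 2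
        ≤ dt * ((1 + 2 * |Δw|) ^ 2 * (1 + |y - w|) ^ 2) * (4 * (t + θ * dt) ^ 2) :=
      mul_le_mul_of_nonneg_left n2 (mul_nonneg hdt (by positivity))
    have m3 : dt * ((1 + 2 * |Δw|) ^ 2 * (1 + |y - w|) ^ 2) * (4 * (t + θ * dt) ^ 2)
        = 2 * dt * (1 + 2 * |Δw|) ^ 2 * (1 + |y - w|) ^ 2 * (2 * (t + θ * dt) ^ 2) := by
      ring
    linarith
  have e : (2 * dt / t + 2 * |Δw| * (1 + 2 * |Δw|) / t + 2 * dt * (1 + 2 * |Δw|) ^ 2 / t ^ 2) *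
      (1 + |y - w|) ^ 2 = (2 * dt / t) * (1 + |y - w|) ^ 2 +
      (2 * |Δw| * (1 + 2 * |Δw|) / t) * (1 + |y - w|) ^ 2 +
      (2 * dt * (1 + 2 * |Δw|) ^ 2 / t ^ 2) * (1 + |y - w|) ^ 2 := by ring
  linarith

lemma Lball (t dt Δw θ₀ θ' : ℝ) (ht : 0 < t) (hdt : 0 ≤ dt)
    (h00 : 0 ≤ θ₀) (h01 : θ₀ ≤ 1)
    (hθ' : |θ' - θ₀| < min 1 (t / (2 * (dt + 1)))) :
    t / 2 ≤ t + θ' * dt ∧ t + θ' * dt ≤ 2 * (t + dt) ∧ |θ' * Δw| ≤ 2 * |Δw| := by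
  have hd1 : |θ' - θ₀| < 1 := lt_of_lt_of_le hθ' (min_le_left _ _)
  have hd2 : |θ' - θ₀| < t / (2 * (dt + 1)) := lt_of_lt_of_le hθ' (min_le_right _ _)
  rw [abs_lt] at hd1 hd2
  have hθ'u : θ' ≤ 2 := by linarith
  have hθ'l : -(t / (2 * (dt + 1))) ≤ θ' := by linarith
  refine ⟨?_, ?_, ?_⟩
  · have k1 : (-(t / (2 * (dt + 1)))) * dt ≤ θ' * dt := mul_le_mul_of_nonneg_right hθ'l hdt
    have k2 : (t / (2 * (dt + 1))) * dt ≤ t / 2 := by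
      rw [div_mul_eq_mul_div, div_le_div_iff₀ (by positivity) (by norm_num : (0:ℝ) < 2)]
      nlinarith [ht, hdt]
    linarith [k1, k2]
  · have h5 : θ' * dt ≤ 2 * dt := mul_le_mul_of_nonneg_right hθ'u hdt
    linarith [h5, ht, hdt]
  · rw [abs_mul]
    have h2 : |θ'| ≤ 2 := by
      rw [abs_le]
      constructor
      · have h6 : -(1:ℝ) ≤ θ' - θ₀ := le_of_lt hd1.1
        linarith
      · exact hθ'u
    exact mul_le_mul_of_nonneg_right h2 (abs_nonneg Δw)

lemma Lsti (t : ℝ) (ht : 0 < t) : (Real.sqrt t)⁻¹ ≤ 1 + t⁻¹ := by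
  have hsqt : Real.sqrt t * Real.sqrt t = t := Real.mul_self_sqrt ht.le
  rcases le_total 1 t with h | h
  · have h1 : (1:ℝ) ≤ Real.sqrt t := by nlinarith [Real.sqrt_nonneg t]
    have h2 := inv_le_one_of_one_le₀ h1
    have h3 : (0:ℝ) ≤ t⁻¹ := inv_nonneg.mpr ht.le
    linarith
  · have h1 : Real.sqrt t ≤ 1 := by nlinarith [Real.sqrt_nonneg t]
    have h2 : t ≤ Real.sqrt t := by nlinarith [Real.sqrt_nonneg t]
    have h3 : (Real.sqrt t)⁻¹ ≤ t⁻¹ := inv_anti₀ ht h2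
    linarith

lemma Lz (p : ℕ) (C A w Δw t dt θ₀ : ℝ) (hC : 0 < C) (hA0 : 0 ≤ A)
    (ht : 0 < t) (hdt : 0 ≤ dt) (h00 : 0 ≤ θ₀) (h01 : θ₀ ≤ 1) (z : ℝ) :
    C * (A + |(w + θ₀ * Δw) + Real.sqrt (t + θ₀ * dt) * z| ^ p) *
      (dt / (2 * (t + θ₀ * dt)) + |Δw| * (Real.sqrt (t + θ₀ * dt) * |z|) / (t + θ₀ * dt) +
        dt * ((t + θ₀ * dt) * z ^ 2) / (2 * (t + θ₀ * dt) ^ 2))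
    ≤ (C * 4 ^ p * (A + |w| ^ p + |Δw| ^ p + Real.sqrt t ^ p + Real.sqrt dt ^ p) *
        ((|Δw| + dt) * (1 + t⁻¹))) * ((1 + |z| ^ p) * (1 + |z| + z ^ 2)) := by
  have hv : 0 < t + θ₀ * dt := by nlinarith [mul_nonneg h00 hdt]
  have htv : t ≤ t + θ₀ * dt := by nlinarith [mul_nonneg h00 hdt]
  have hsv : 0 < Real.sqrt (t + θ₀ * dt) := Real.sqrt_pos.mpr hv
  have hsvv : Real.sqrt (t + θ₀ * dt) * Real.sqrt (t + θ₀ * dt) = t + θ₀ * dt :=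
    Real.mul_self_sqrt hv.le
  have hsti := Lsti t ht
  have hvle : t + θ₀ * dt ≤ t + dt := by
    have h5 := mul_le_mul_of_nonneg_right h01 hdt
    nlinarith [h5]
  have hsvle : Real.sqrt (t + θ₀ * dt) ≤ Real.sqrt t + Real.sqrt dt := by
    rw [Real.sqrt_le_left (by positivity)]
    nlinarith [Real.mul_self_sqrt ht.le, Real.mul_self_sqrt hdt,
      Real.sqrt_nonneg t, Real.sqrt_nonneg dt, hvle]
  have habs1 : |Real.sqrt (t + θ₀ * dt) * z| = Real.sqrt (t + θ₀ * dt) * |z| := by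
    rw [abs_mul, abs_of_nonneg hsv.le]
  set B := A + |w| ^ p + |Δw| ^ p + Real.sqrt t ^ p + Real.sqrt dt ^ p with hB
  have hB0 : 0 ≤ B := by
    rw [hB]
    have := pow_nonneg (abs_nonneg w) p
    have := pow_nonneg (abs_nonneg Δw) p
    have := pow_nonneg (Real.sqrt_nonneg t) p
    have := pow_nonneg (Real.sqrt_nonneg dt) p
    linarith
  have hpt : |(w + θ₀ * Δw) + Real.sqrt (t + θ₀ * dt) * z|
      ≤ (|w| + |Δw|) + (Real.sqrt t + Real.sqrt dt) * |z| := by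
    have hμ : |w + θ₀ * Δw| ≤ |w| + |Δw| := by
      refine le_trans (abs_add_le _ _) ?_
      have hth : |θ₀ * Δw| ≤ |Δw| := by
        rw [abs_mul]
        have hθa : |θ₀| ≤ 1 := by rw [abs_le]; constructor <;> linarith
        nlinarith [abs_nonneg Δw]
      linarith
    refine le_trans (abs_add_le _ _) ?_
    rw [habs1]
    have h9 : Real.sqrt (t + θ₀ * dt) * |z| ≤ (Real.sqrt t + Real.sqrt dt) * |z| :=
      mul_le_mul_of_nonneg_right hsvle (abs_nonneg z)
    linarith
  have hpow : |(w + θ₀ * Δw) + Real.sqrt (t + θ₀ * dt) * z| ^ p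
      ≤ 4 ^ p * ((|w| ^ p + |Δw| ^ p) +
        (Real.sqrt t ^ p + Real.sqrt dt ^ p) * |z| ^ p) := by
    have h1 := pow_le_pow_left₀ (abs_nonneg _) hpt p
    have h2 : ((|w| + |Δw|) + (Real.sqrt t + Real.sqrt dt) * |z|) ^ p
        ≤ 2 ^ p * ((|w| + |Δw|) ^ p + ((Real.sqrt t + Real.sqrt dt) * |z|) ^ p) :=
      pow_add_le' (by positivity) (by positivity) p
    have h3 : (|w| + |Δw|) ^ p ≤ 2 ^ p * (|w| ^ p + |Δw| ^ p) :=
      pow_add_le' (abs_nonneg w) (abs_nonneg Δw) p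
    have h4 : ((Real.sqrt t + Real.sqrt dt) * |z|) ^ p
        = (Real.sqrt t + Real.sqrt dt) ^ p * |z| ^ p := mul_pow _ _ p
    have h5 : (Real.sqrt t + Real.sqrt dt) ^ p
        ≤ 2 ^ p * (Real.sqrt t ^ p + Real.sqrt dt ^ p) :=
      pow_add_le' (Real.sqrt_nonneg t) (Real.sqrt_nonneg dt) p
    have h6 : ((Real.sqrt t + Real.sqrt dt) * |z|) ^ p
        ≤ (2 ^ p * (Real.sqrt t ^ p + Real.sqrt dt ^ p)) * |z| ^ p := by
      rw [h4]
      exact mul_le_mul_of_nonneg_right h5 (pow_nonneg (abs_nonneg z) p)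
    have h7 : (2:ℝ) ^ p * ((|w| + |Δw|) ^ p + ((Real.sqrt t + Real.sqrt dt) * |z|) ^ p)
        ≤ 2 ^ p * (2 ^ p * (|w| ^ p + |Δw| ^ p) +
          (2 ^ p * (Real.sqrt t ^ p + Real.sqrt dt ^ p)) * |z| ^ p) := by
      apply mul_le_mul_of_nonneg_left _ (by positivity)
      linarith [h3, h6]
    have e44 : (4:ℝ) ^ p = 2 ^ p * 2 ^ p := by rw [← mul_pow]; norm_num
    calc |(w + θ₀ * Δw) + Real.sqrt (t + θ₀ * dt) * z| ^ p
        ≤ 2 ^ p * ((|w| + |Δw|) ^ p + ((Real.sqrt t + Real.sqrt dt) * |z|) ^ p) :=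
          le_trans h1 h2
      _ ≤ 2 ^ p * (2 ^ p * (|w| ^ p + |Δw| ^ p) +
          (2 ^ p * (Real.sqrt t ^ p + Real.sqrt dt ^ p)) * |z| ^ p) := h7
      _ = 4 ^ p * ((|w| ^ p + |Δw| ^ p) +
          (Real.sqrt t ^ p + Real.sqrt dt ^ p) * |z| ^ p) := by rw [e44]; ring
  have h14 : (1:ℝ) ≤ 4 ^ p := one_le_pow₀ (by norm_num)
  have part1 : C * (A + |(w + θ₀ * Δw) + Real.sqrt (t + θ₀ * dt) * z| ^ p)
      ≤ C * 4 ^ p * B * (1 + |z| ^ p) := by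
    have hzp : (0:ℝ) ≤ |z| ^ p := pow_nonneg (abs_nonneg z) p
    have hApos : A ≤ 4 ^ p * A := le_mul_of_one_le_left hA0 h14
    have hBz : (Real.sqrt t ^ p + Real.sqrt dt ^ p) * |z| ^ p ≤ B * |z| ^ p := by
      apply mul_le_mul_of_nonneg_right _ hzp
      rw [hB]
      have := pow_nonneg (abs_nonneg w) p
      have := pow_nonneg (abs_nonneg Δw) p
      linarith
    have h7' : A + 4 ^ p * (|w| ^ p + |Δw| ^ p) ≤ 4 ^ p * B := by
      rw [hB]
      have k1 : (0:ℝ) ≤ 4 ^ p * (Real.sqrt t ^ p) := by positivity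
      have k2 : (0:ℝ) ≤ 4 ^ p * (Real.sqrt dt ^ p) := by positivity
      nlinarith [hApos, pow_nonneg (abs_nonneg w) p, pow_nonneg (abs_nonneg Δw) p]
    have h8' : 4 ^ p * ((Real.sqrt t ^ p + Real.sqrt dt ^ p) * |z| ^ p)
        ≤ 4 ^ p * (B * |z| ^ p) := mul_le_mul_of_nonneg_left hBz (by positivity)
    have core : A + |(w + θ₀ * Δw) + Real.sqrt (t + θ₀ * dt) * z| ^ p
        ≤ 4 ^ p * B * (1 + |z| ^ p) := by
      calc A + |(w + θ₀ * Δw) + Real.sqrt (t + θ₀ * dt) * z| ^ p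
          ≤ A + 4 ^ p * ((|w| ^ p + |Δw| ^ p) +
            (Real.sqrt t ^ p + Real.sqrt dt ^ p) * |z| ^ p) := by linarith [hpow]
        _ = (A + 4 ^ p * (|w| ^ p + |Δw| ^ p)) +
            4 ^ p * ((Real.sqrt t ^ p + Real.sqrt dt ^ p) * |z| ^ p) := by ring
        _ ≤ 4 ^ p * B + 4 ^ p * (B * |z| ^ p) := add_le_add h7' h8'
        _ = 4 ^ p * B * (1 + |z| ^ p) := by ring
    calc C * (A + |(w + θ₀ * Δw) + Real.sqrt (t + θ₀ * dt) * z| ^ p)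
        ≤ C * (4 ^ p * B * (1 + |z| ^ p)) := mul_le_mul_of_nonneg_left core hC.le
      _ = C * 4 ^ p * B * (1 + |z| ^ p) := by ring
  have hti : (0:ℝ) ≤ t⁻¹ := inv_nonneg.mpr ht.le
  have b1 : dt / (2 * (t + θ₀ * dt)) ≤ dt * (1 + t⁻¹) := by
    have e1 : dt / (2 * (t + θ₀ * dt)) ≤ dt / t := by
      rw [div_le_div_iff₀ (by positivity) ht]
      nlinarith [hdt, htv]
    have e2 : dt / t = dt * t⁻¹ := div_eq_mul_inv dt t
    have e3 : dt * t⁻¹ ≤ dt * (1 + t⁻¹) :=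
      mul_le_mul_of_nonneg_left (by linarith) hdt
    linarith
  have b2 : |Δw| * (Real.sqrt (t + θ₀ * dt) * |z|) / (t + θ₀ * dt)
      ≤ (|Δw| * |z|) * (1 + t⁻¹) := by
    have hsvt : Real.sqrt t ≤ Real.sqrt (t + θ₀ * dt) := Real.sqrt_le_sqrt htv
    have hstpos : 0 < Real.sqrt t := Real.sqrt_pos.mpr ht
    have hvinv : (Real.sqrt (t + θ₀ * dt))⁻¹ ≤ (Real.sqrt t)⁻¹ := inv_anti₀ hstpos hsvt
    have e1 : |Δw| * (Real.sqrt (t + θ₀ * dt) * |z|) / (t + θ₀ * dt)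
        = (|Δw| * |z|) * (Real.sqrt (t + θ₀ * dt))⁻¹ := by
      field_simp
      linear_combination |Δw| * |z| * hsvv
    rw [e1]
    have hnn : (0:ℝ) ≤ |Δw| * |z| := mul_nonneg (abs_nonneg _) (abs_nonneg _)
    calc (|Δw| * |z|) * (Real.sqrt (t + θ₀ * dt))⁻¹
        ≤ (|Δw| * |z|) * (Real.sqrt t)⁻¹ := mul_le_mul_of_nonneg_left hvinv hnn
      _ ≤ (|Δw| * |z|) * (1 + t⁻¹) := mul_le_mul_of_nonneg_left hsti hnn
  have b3 : dt * ((t + θ₀ * dt) * z ^ 2) / (2 * (t + θ₀ * dt) ^ 2)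
      ≤ (dt * z ^ 2) * (1 + t⁻¹) := by
    have e1 : dt * ((t + θ₀ * dt) * z ^ 2) / (2 * (t + θ₀ * dt) ^ 2)
        = (dt * z ^ 2) / (2 * (t + θ₀ * dt)) := by
      field_simp
    rw [e1]
    have e2 : (dt * z ^ 2) / (2 * (t + θ₀ * dt)) ≤ (dt * z ^ 2) / t := by
      rw [div_le_div_iff₀ (by positivity) ht]
      nlinarith [mul_nonneg hdt (sq_nonneg z), htv]
    have e3 : (dt * z ^ 2) / t = (dt * z ^ 2) * t⁻¹ := div_eq_mul_inv _ _
    have e4 : (dt * z ^ 2) * t⁻¹ ≤ (dt * z ^ 2) * (1 + t⁻¹) :=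
      mul_le_mul_of_nonneg_left (by linarith) (mul_nonneg hdt (sq_nonneg z))
    linarith
  have part2 : dt / (2 * (t + θ₀ * dt)) +
      |Δw| * (Real.sqrt (t + θ₀ * dt) * |z|) / (t + θ₀ * dt) +
      dt * ((t + θ₀ * dt) * z ^ 2) / (2 * (t + θ₀ * dt) ^ 2)
      ≤ (|Δw| + dt) * (1 + t⁻¹) * (1 + |z| + z ^ 2) := by
    have h1t : (0:ℝ) ≤ 1 + t⁻¹ := by linarith
    have hsum : dt * (1 + t⁻¹) + (|Δw| * |z|) * (1 + t⁻¹) + (dt * z ^ 2) * (1 + t⁻¹)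
        ≤ (|Δw| + dt) * (1 + t⁻¹) * (1 + |z| + z ^ 2) := by
      nlinarith [mul_nonneg (abs_nonneg Δw) h1t,
        mul_nonneg (mul_nonneg (abs_nonneg Δw) (sq_nonneg z)) h1t,
        mul_nonneg (mul_nonneg hdt (abs_nonneg z)) h1t]
    linarith [b1, b2, b3]
  have hbr_pt_nn : (0:ℝ) ≤ dt / (2 * (t + θ₀ * dt)) +
      |Δw| * (Real.sqrt (t + θ₀ * dt) * |z|) / (t + θ₀ * dt) +
      dt * ((t + θ₀ * dt) * z ^ 2) / (2 * (t + θ₀ * dt) ^ 2) := by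
    have n1 : (0:ℝ) ≤ dt / (2 * (t + θ₀ * dt)) := div_nonneg hdt (by positivity)
    have n2 : (0:ℝ) ≤ |Δw| * (Real.sqrt (t + θ₀ * dt) * |z|) / (t + θ₀ * dt) :=
      div_nonneg (mul_nonneg (abs_nonneg _) (mul_nonneg hsv.le (abs_nonneg _))) hv.le
    have n3 : (0:ℝ) ≤ dt * ((t + θ₀ * dt) * z ^ 2) / (2 * (t + θ₀ * dt) ^ 2) :=
      div_nonneg (mul_nonneg hdt (mul_nonneg hv.le (sq_nonneg _))) (by positivity)
    linarith
  have hRHS1nn : (0:ℝ) ≤ C * 4 ^ p * B * (1 + |z| ^ p) := by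
    have k1 : (0:ℝ) ≤ C * 4 ^ p := by positivity
    have k2 : (0:ℝ) ≤ 1 + |z| ^ p := by positivity
    exact mul_nonneg (mul_nonneg k1 hB0) k2
  calc C * (A + |(w + θ₀ * Δw) + Real.sqrt (t + θ₀ * dt) * z| ^ p) *
      (dt / (2 * (t + θ₀ * dt)) +
        |Δw| * (Real.sqrt (t + θ₀ * dt) * |z|) / (t + θ₀ * dt) +
        dt * ((t + θ₀ * dt) * z ^ 2) / (2 * (t + θ₀ * dt) ^ 2))
      ≤ (C * 4 ^ p * B * (1 + |z| ^ p)) *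
        ((|Δw| + dt) * (1 + t⁻¹) * (1 + |z| + z ^ 2)) :=
        mul_le_mul part1 part2 hbr_pt_nn hRHS1nn
    _ = (C * 4 ^ p * B * ((|Δw| + dt) * (1 + t⁻¹))) *
        ((1 + |z| ^ p) * (1 + |z| + z ^ 2)) := by ring


lemma main_aux (p : ℕ) (C : ℝ) (hC : 0 < C) (g : ℝ → ℝ) (hg : Measurable g)
    (A : ℝ) (hA : 1 ≤ A) (hgb : ∀ y, |g y| ≤ C * (A + |y| ^ p))
    (w Δw t dt : ℝ) (ht : 0 < t) (hdt : 0 ≤ dt) :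
    |(∫ z, g (w + Δw + Real.sqrt (t + dt) * z) ∂gaussianReal 0 1) -
        (∫ z, g (w + Real.sqrt t * z) ∂gaussianReal 0 1)| ≤
      (C * 4 ^ p * (∫ z, (1 + |z| ^ p) * (1 + |z| + z ^ 2) ∂gaussianReal 0 1)) *
        (|Δw| + dt) * (1 + t⁻¹) *
        (A + |w| ^ p + |Δw| ^ p + Real.sqrt t ^ p + Real.sqrt dt ^ p) := by
  have hs : 0 < t + dt := by linarith
  have hA0 : 0 ≤ A := by linarith
  set Kp := ∫ z, (1 + |z| ^ p) * (1 + |z| + z ^ 2) ∂gaussianReal 0 1 with hKp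
  set B := A + |w| ^ p + |Δw| ^ p + Real.sqrt t ^ p + Real.sqrt dt ^ p with hB
  set f : ℝ → ℝ → ℝ := fun θ y => (Real.sqrt (2 * π * (t + θ * dt)))⁻¹ *
    Real.exp (-(y - (w + θ * Δw)) ^ 2 / (2 * (t + θ * dt))) with hfdef
  set br : ℝ → ℝ → ℝ := fun θ y => -(dt / (2 * (t + θ * dt))) +
    Δw * (y - (w + θ * Δw)) / (t + θ * dt) +
    dt * (y - (w + θ * Δw)) ^ 2 / (2 * (t + θ * dt) ^ 2) with hbrdef
  set F : ℝ → ℝ := fun θ => ∫ y, g y * f θ y with hFdef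
  have hfnn : ∀ θ y, 0 ≤ f θ y := by
    intro θ y; rw [hfdef]; positivity
  have hfm : ∀ θ, Measurable (f θ) := by
    intro θ; rw [hfdef]
    exact ((((measurable_id.sub measurable_const).pow_const 2).neg.div_const _).exp).const_mul _
  have hbrm : ∀ θ, Measurable (br θ) := by
    intro θ; rw [hbrdef]
    apply Measurable.add
    apply Measurable.add
    · exact measurable_const
    · exact (((measurable_id.sub measurable_const).const_mul Δw).div_const _)
    · exact ((((measurable_id.sub measurable_const).pow_const 2).const_mul dt).div_const _)
  have hF0 : (∫ z, g (w + Real.sqrt t * z) ∂gaussianReal 0 1) = F 0 := by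
    rw [gauss_CoV g hg w t ht, hFdef]
    apply integral_congr_ae
    filter_upwards with y
    simp only [hfdef, zero_mul, add_zero]
  have hF1 : (∫ z, g (w + Δw + Real.sqrt (t + dt) * z) ∂gaussianReal 0 1) = F 1 := by
    rw [gauss_CoV g hg (w + Δw) (t + dt) hs, hFdef]
    apply integral_congr_ae
    filter_upwards with y
    simp only [hfdef, one_mul]
  set D1 := C * (A + 2 ^ p * |w| ^ p + 2 ^ p) with hD1def
  have hD1 : 0 ≤ D1 := by
    rw [hD1def]
    have h1 : (0:ℝ) ≤ 2 ^ p * |w| ^ p + 2 ^ p := by positivity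
    exact mul_nonneg hC.le (by linarith only [h1, hA0])
  set D2 := 2 * dt / t + 2 * |Δw| * (1 + 2 * |Δw|) / t + 2 * dt * (1 + 2 * |Δw|) ^ 2 / t ^ 2
    with hD2def
  have hD2 : 0 ≤ D2 := by
    rw [hD2def]
    have h1 : (0:ℝ) ≤ 2 * dt / t := div_nonneg (by linarith only [hdt]) ht.le
    have h2 : (0:ℝ) ≤ 2 * |Δw| * (1 + 2 * |Δw|) / t := div_nonneg (by positivity) ht.le
    have h3 : (0:ℝ) ≤ 2 * dt * (1 + 2 * |Δw|) ^ 2 / t ^ 2 :=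
      div_nonneg (mul_nonneg (by linarith only [hdt]) (by positivity)) (by positivity)
    linarith only [h1, h2, h3]
  set D3 := (Real.sqrt (π * t))⁻¹ * Real.exp (4 * Δw ^ 2 / t) with hD3def
  have hD3 : 0 ≤ D3 := by rw [hD3def]; positivity
  have hb8 : (0:ℝ) < 1 / (8 * (t + dt)) := by positivity
  have hmaster : ∀ (c : ℝ) (G : ℝ → ℝ), AEStronglyMeasurable G volume →
      (∀ y, |G y| ≤ c * ((1 + |y - w|) ^ (p + 2) *
        Real.exp (-(1 / (8 * (t + dt))) * (y - w) ^ 2))) → Integrable G := by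
    intro c G hGm hGb
    refine Integrable.mono'
      ((integrable_one_add_abs_pow_mul_gauss (p + 2) hb8 w).const_mul c) hGm ?_
    filter_upwards with y
    rw [Real.norm_eq_abs]
    exact hGb y
  have hgb1 : ∀ y, |g y| ≤ D1 * (1 + |y - w|) ^ p := by
    intro y
    rw [hD1def]
    exact le_trans (hgb y) (La p C A w hC hA0 y)
  have hfb : ∀ θ : ℝ, t / 2 ≤ t + θ * dt → t + θ * dt ≤ 2 * (t + dt) → |θ * Δw| ≤ 2 * |Δw| →
      ∀ y, f θ y ≤ D3 * Real.exp (-(1 / (8 * (t + dt))) * (y - w) ^ 2) := by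
    intro θ h1 h2 h3 y
    simp only [hfdef, hD3def]
    exact Lb w Δw t dt θ y ht hdt h1 h2 h3
  have hbrb : ∀ θ : ℝ, t / 2 ≤ t + θ * dt → |θ * Δw| ≤ 2 * |Δw| →
      ∀ y, |br θ y| ≤ D2 * (1 + |y - w|) ^ 2 := by
    intro θ h1 h3 y
    have hv : 0 < t + θ * dt := by linarith only [h1, ht]
    simp only [hbrdef, hD2def]
    exact le_trans (Lhabs w Δw t dt θ y hdt hv) (Lc w Δw t dt θ y ht hdt h1 h3)
  have hgood_bound : ∀ θ : ℝ, t / 2 ≤ t + θ * dt → t + θ * dt ≤ 2 * (t + dt) →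
      |θ * Δw| ≤ 2 * |Δw| → ∀ y,
      |g y * (f θ y * br θ y)| ≤ D1 * D2 * D3 *
        ((1 + |y - w|) ^ (p + 2) * Real.exp (-(1 / (8 * (t + dt))) * (y - w) ^ 2)) := by
    intro θ h1 h2 h3 y
    have e0 : |g y * (f θ y * br θ y)| = |g y| * (f θ y * |br θ y|) := by
      rw [abs_mul, abs_mul, abs_of_nonneg (hfnn θ y)]
    rw [e0]
    have s1 := hgb1 y
    have s2 := hfb θ h1 h2 h3 y
    have s3 := hbrb θ h1 h3 y
    have inner : f θ y * |br θ y| ≤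
        (D3 * Real.exp (-(1 / (8 * (t + dt))) * (y - w) ^ 2)) * (D2 * (1 + |y - w|) ^ 2) :=
      mul_le_mul s2 s3 (abs_nonneg _) (by positivity)
    have outer : |g y| * (f θ y * |br θ y|) ≤ (D1 * (1 + |y - w|) ^ p) *
        ((D3 * Real.exp (-(1 / (8 * (t + dt))) * (y - w) ^ 2)) * (D2 * (1 + |y - w|) ^ 2)) :=
      mul_le_mul s1 inner (mul_nonneg (hfnn θ y) (abs_nonneg _))
        (mul_nonneg hD1 (by positivity))
    refine le_trans outer (le_of_eq ?_)
    rw [pow_add]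
    ring
  set ε := min 1 (t / (2 * (dt + 1))) with hεdef
  have hε : 0 < ε := lt_min one_pos (by positivity)
  have hgoodIcc : ∀ θ ∈ Set.Icc (0:ℝ) 1,
      t / 2 ≤ t + θ * dt ∧ t + θ * dt ≤ 2 * (t + dt) ∧ |θ * Δw| ≤ 2 * |Δw| := by
    intro θ hθ
    refine Lball t dt Δw θ θ ht hdt hθ.1 hθ.2 ?_
    rw [sub_self, abs_zero, ← hεdef]
    exact hε
  have hball : ∀ θ₀ ∈ Set.Icc (0:ℝ) 1, ∀ θ' ∈ Metric.ball θ₀ ε,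
      t / 2 ≤ t + θ' * dt ∧ t + θ' * dt ≤ 2 * (t + dt) ∧ |θ' * Δw| ≤ 2 * |Δw| := by
    intro θ₀ hθ₀ θ' hθ'
    rw [Metric.mem_ball, Real.dist_eq, hεdef] at hθ'
    exact Lball t dt Δw θ₀ θ' ht hdt hθ₀.1 hθ₀.2 hθ'
  have hbndint : Integrable (fun y : ℝ => D1 * D2 * D3 *
      ((1 + |y - w|) ^ (p + 2) * Real.exp (-(1 / (8 * (t + dt))) * (y - w) ^ 2))) :=
    (integrable_one_add_abs_pow_mul_gauss (p + 2) hb8 w).const_mul _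
  have hf'meas : ∀ θ : ℝ, Measurable (fun y => g y * (f θ y * br θ y)) :=
    fun θ => hg.mul ((hfm θ).mul (hbrm θ))
  have hfint : ∀ θ₀ ∈ Set.Icc (0:ℝ) 1, Integrable (fun y => g y * f θ₀ y) := by
    intro θ₀ hθ₀
    obtain ⟨q1, q2, q3⟩ := hgoodIcc θ₀ hθ₀
    refine hmaster (D1 * D3) _ (hg.mul (hfm θ₀)).aestronglyMeasurable ?_
    intro y
    rw [abs_mul, abs_of_nonneg (hfnn θ₀ y)]
    have s1 := hgb1 y
    have s3 := hfb θ₀ q1 q2 q3 y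
    have hPle : (1 + |y - w|) ^ p ≤ (1 + |y - w|) ^ (p + 2) :=
      pow_le_pow_right₀ (by linarith only [abs_nonneg (y - w)]) (by omega)
    calc |g y| * f θ₀ y
        ≤ (D1 * (1 + |y - w|) ^ p) *
          (D3 * Real.exp (-(1 / (8 * (t + dt))) * (y - w) ^ 2)) :=
          mul_le_mul s1 s3 (hfnn θ₀ y) (mul_nonneg hD1 (by positivity))
      _ ≤ (D1 * (1 + |y - w|) ^ (p + 2)) *
          (D3 * Real.exp (-(1 / (8 * (t + dt))) * (y - w) ^ 2)) := by
          apply mul_le_mul_of_nonneg_right _ (by positivity)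
          exact mul_le_mul_of_nonneg_left hPle hD1
      _ = D1 * D3 * ((1 + |y - w|) ^ (p + 2) *
          Real.exp (-(1 / (8 * (t + dt))) * (y - w) ^ 2)) := by ring
  have hderiv : ∀ θ₀ ∈ Set.Icc (0:ℝ) 1,
      Integrable (fun y => g y * (f θ₀ y * br θ₀ y)) ∧
        HasDerivAt F (∫ y, g y * (f θ₀ y * br θ₀ y)) θ₀ := by
    intro θ₀ hθ₀
    refine hasDerivAt_integral_of_dominated_loc_of_deriv_le
      (μ := volume) (F := fun θ y => g y * f θ y)
      (F' := fun θ y => g y * (f θ y * br θ y)) (bound := fun y => D1 * D2 * D3 *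
        ((1 + |y - w|) ^ (p + 2) * Real.exp (-(1 / (8 * (t + dt))) * (y - w) ^ 2))) (Metric.ball_mem_nhds θ₀ hε)
      (Filter.Eventually.of_forall fun θ => (hg.mul (hfm θ)).aestronglyMeasurable)
      (hfint θ₀ hθ₀)
      ((hf'meas θ₀).aestronglyMeasurable)
      (Filter.Eventually.of_forall fun y => ?_)
      hbndint
      (Filter.Eventually.of_forall fun y => ?_)
    · intro θ' hθ'
      obtain ⟨q1, q2, q3⟩ := hball θ₀ hθ₀ θ' hθ'
      rw [Real.norm_eq_abs]
      exact hgood_bound θ' q1 q2 q3 y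
    · intro θ' hθ'
      obtain ⟨q1, _, _⟩ := hball θ₀ hθ₀ θ' hθ'
      have hv : 0 < t + θ' * dt := by linarith only [q1, ht]
      exact (hasDerivAt_gpdf w Δw t dt y θ' hv).const_mul (g y)
  have hKbd : ∀ θ₀ ∈ Set.Icc (0:ℝ) 1,
      |∫ y, g y * (f θ₀ y * br θ₀ y)| ≤
        (C * 4 ^ p * Kp) * ((|Δw| + dt) * ((1 + t⁻¹) * B)) := by
    intro θ₀ hθ₀
    obtain ⟨q1, q2, q3⟩ := hgoodIcc θ₀ hθ₀
    obtain ⟨hθ00, hθ01⟩ := hθ₀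
    have hv : 0 < t + θ₀ * dt := by linarith only [q1, ht]
    have hsv : 0 < Real.sqrt (t + θ₀ * dt) := Real.sqrt_pos.mpr hv
    set Φ : ℝ → ℝ := fun y => C * (A + |y| ^ p) *
      (dt / (2 * (t + θ₀ * dt)) + |Δw| * |y - (w + θ₀ * Δw)| / (t + θ₀ * dt) +
        dt * (y - (w + θ₀ * Δw)) ^ 2 / (2 * (t + θ₀ * dt) ^ 2)) with hΦdef
    have hΦm : Measurable Φ := by
      rw [hΦdef]
      exact (((measurable_abs.pow_const p).const_add A).const_mul C).mul
        ((measurable_const.add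
          ((((measurable_id.sub measurable_const).abs).const_mul |Δw|).div_const _)).add
          ((((measurable_id.sub measurable_const).pow_const 2).const_mul dt).div_const _))
    have hbrabs_nn : ∀ y : ℝ, (0:ℝ) ≤ dt / (2 * (t + θ₀ * dt)) +
        |Δw| * |y - (w + θ₀ * Δw)| / (t + θ₀ * dt) +
        dt * (y - (w + θ₀ * Δw)) ^ 2 / (2 * (t + θ₀ * dt) ^ 2) := by
      intro y
      have n1 : (0:ℝ) ≤ dt / (2 * (t + θ₀ * dt)) := div_nonneg hdt (by positivity)
      have n2 : (0:ℝ) ≤ |Δw| * |y - (w + θ₀ * Δw)| / (t + θ₀ * dt) :=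
        div_nonneg (mul_nonneg (abs_nonneg _) (abs_nonneg _)) hv.le
      have n3 : (0:ℝ) ≤ dt * (y - (w + θ₀ * Δw)) ^ 2 / (2 * (t + θ₀ * dt) ^ 2) :=
        div_nonneg (mul_nonneg hdt (sq_nonneg _)) (by positivity)
      linarith only [n1, n2, n3]
    have hCA_nn : ∀ y : ℝ, (0:ℝ) ≤ C * (A + |y| ^ p) := by
      intro y
      exact mul_nonneg hC.le (add_nonneg hA0 (by positivity))
    have hΦnn : ∀ y, 0 ≤ Φ y := by
      intro y
      rw [hΦdef]
      exact mul_nonneg (hCA_nn y) (hbrabs_nn y)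
    have hΦf_int : Integrable (fun y => Φ y * f θ₀ y) := by
      refine hmaster (D1 * D2 * D3) _ (hΦm.mul (hfm θ₀)).aestronglyMeasurable ?_
      intro y
      rw [abs_of_nonneg (mul_nonneg (hΦnn y) (hfnn θ₀ y))]
      have s1 : C * (A + |y| ^ p) ≤ D1 * (1 + |y - w|) ^ p := by
        rw [hD1def]; exact La p C A w hC hA0 y
      have s3 : dt / (2 * (t + θ₀ * dt)) + |Δw| * |y - (w + θ₀ * Δw)| / (t + θ₀ * dt) +
          dt * (y - (w + θ₀ * Δw)) ^ 2 / (2 * (t + θ₀ * dt) ^ 2)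
          ≤ D2 * (1 + |y - w|) ^ 2 := by
        rw [hD2def]; exact Lc w Δw t dt θ₀ y ht hdt q1 q3
      have s2 := hfb θ₀ q1 q2 q3 y
      have hΦb : Φ y ≤ (D1 * (1 + |y - w|) ^ p) * (D2 * (1 + |y - w|) ^ 2) := by
        rw [hΦdef]
        exact mul_le_mul s1 s3 (hbrabs_nn y) (mul_nonneg hD1 (by positivity))
      calc Φ y * f θ₀ y
          ≤ ((D1 * (1 + |y - w|) ^ p) * (D2 * (1 + |y - w|) ^ 2)) *
            (D3 * Real.exp (-(1 / (8 * (t + dt))) * (y - w) ^ 2)) :=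
            mul_le_mul hΦb s2 (hfnn θ₀ y)
              (mul_nonneg (mul_nonneg hD1 (by positivity)) (mul_nonneg hD2 (by positivity)))
        _ = D1 * D2 * D3 * ((1 + |y - w|) ^ (p + 2) *
            Real.exp (-(1 / (8 * (t + dt))) * (y - w) ^ 2)) := by
            rw [pow_add]; ring
    have step1 : |∫ y, g y * (f θ₀ y * br θ₀ y)| ≤ ∫ y, Φ y * f θ₀ y := by
      have habs_int : |∫ y, g y * (f θ₀ y * br θ₀ y)| ≤ ∫ y, |g y * (f θ₀ y * br θ₀ y)| := by
        simpa only [Real.norm_eq_abs] using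
          norm_integral_le_integral_norm (μ := volume) (fun y => g y * (f θ₀ y * br θ₀ y))
      refine le_trans habs_int ?_
      apply integral_mono_of_nonneg (Filter.Eventually.of_forall fun y => abs_nonneg _) hΦf_int
      filter_upwards with y
      have e0 : |g y * (f θ₀ y * br θ₀ y)| = |g y| * (|br θ₀ y| * f θ₀ y) := by
        rw [abs_mul, abs_mul, abs_of_nonneg (hfnn θ₀ y)]; ring
      rw [e0]
      have s4 : |br θ₀ y| ≤ dt / (2 * (t + θ₀ * dt)) +
          |Δw| * |y - (w + θ₀ * Δw)| / (t + θ₀ * dt) +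
          dt * (y - (w + θ₀ * Δw)) ^ 2 / (2 * (t + θ₀ * dt) ^ 2) := by
        rw [hbrdef]; exact Lhabs w Δw t dt θ₀ y hdt hv
      calc |g y| * (|br θ₀ y| * f θ₀ y)
          ≤ (C * (A + |y| ^ p)) * ((dt / (2 * (t + θ₀ * dt)) +
            |Δw| * |y - (w + θ₀ * Δw)| / (t + θ₀ * dt) +
            dt * (y - (w + θ₀ * Δw)) ^ 2 / (2 * (t + θ₀ * dt) ^ 2)) * f θ₀ y) :=
            mul_le_mul (hgb y) (mul_le_mul_of_nonneg_right s4 (hfnn θ₀ y))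
              (mul_nonneg (abs_nonneg _) (hfnn θ₀ y)) (hCA_nn y)
        _ = Φ y * f θ₀ y := by rw [hΦdef]; ring
    have step2 : (∫ y, Φ y * f θ₀ y) =
        ∫ z, Φ ((w + θ₀ * Δw) + Real.sqrt (t + θ₀ * dt) * z) ∂gaussianReal 0 1 :=
      (gauss_CoV Φ hΦm (w + θ₀ * Δw) (t + θ₀ * dt) hv).symm
    have step3 : (∫ z, Φ ((w + θ₀ * Δw) + Real.sqrt (t + θ₀ * dt) * z) ∂gaussianReal 0 1)
        ≤ ∫ z, (C * 4 ^ p * B * ((|Δw| + dt) * (1 + t⁻¹))) *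
            ((1 + |z| ^ p) * (1 + |z| + z ^ 2)) ∂gaussianReal 0 1 := by
      refine integral_mono_of_nonneg (Filter.Eventually.of_forall fun z => hΦnn _)
        ((qint p).const_mul _) ?_
      filter_upwards with z
      have hsvv : Real.sqrt (t + θ₀ * dt) * Real.sqrt (t + θ₀ * dt) = t + θ₀ * dt :=
        Real.mul_self_sqrt hv.le
      have hsub : (w + θ₀ * Δw) + Real.sqrt (t + θ₀ * dt) * z - (w + θ₀ * Δw)
          = Real.sqrt (t + θ₀ * dt) * z := by ring
      have habs1 : |Real.sqrt (t + θ₀ * dt) * z| = Real.sqrt (t + θ₀ * dt) * |z| := by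
        rw [abs_mul, abs_of_nonneg hsv.le]
      have hsq1 : (Real.sqrt (t + θ₀ * dt) * z) ^ 2 = (t + θ₀ * dt) * z ^ 2 := by
        rw [mul_pow, sq, hsvv]
      simp only [hΦdef]
      rw [hsub, habs1, hsq1, hB]
      exact Lz p C A w Δw t dt θ₀ hC hA0 ht hdt hθ00 hθ01 z
    have step4 : (∫ z, (C * 4 ^ p * B * ((|Δw| + dt) * (1 + t⁻¹))) *
        ((1 + |z| ^ p) * (1 + |z| + z ^ 2)) ∂gaussianReal 0 1)
        = (C * 4 ^ p * B * ((|Δw| + dt) * (1 + t⁻¹))) * Kp := by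
      rw [integral_const_mul, ← hKp]
    calc |∫ y, g y * (f θ₀ y * br θ₀ y)| ≤ ∫ y, Φ y * f θ₀ y := step1
      _ = ∫ z, Φ ((w + θ₀ * Δw) + Real.sqrt (t + θ₀ * dt) * z) ∂gaussianReal 0 1 := step2
      _ ≤ ∫ z, (C * 4 ^ p * B * ((|Δw| + dt) * (1 + t⁻¹))) *
            ((1 + |z| ^ p) * (1 + |z| + z ^ 2)) ∂gaussianReal 0 1 := step3
      _ = (C * 4 ^ p * B * ((|Δw| + dt) * (1 + t⁻¹))) * Kp := step4
      _ = (C * 4 ^ p * Kp) * ((|Δw| + dt) * ((1 + t⁻¹) * B)) := by ring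
  rw [hF1, hF0]
  have h0m : (0:ℝ) ∈ Set.Icc (0:ℝ) 1 := Set.left_mem_Icc.mpr zero_le_one
  have h1m : (1:ℝ) ∈ Set.Icc (0:ℝ) 1 := Set.right_mem_Icc.mpr zero_le_one
  have hbound : ∀ θ ∈ Set.Icc (0:ℝ) 1,
      ‖∫ y, g y * (f θ y * br θ y)‖ ≤ (C * 4 ^ p * Kp) * ((|Δw| + dt) * ((1 + t⁻¹) * B)) := by
    intro θ hθ
    rw [Real.norm_eq_abs]
    exact hKbd θ hθ
  have hmvt := (convex_Icc (0:ℝ) 1).norm_image_sub_le_of_norm_hasDerivWithin_le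
    (f := F) (f' := fun θ => ∫ y, g y * (f θ y * br θ y))
    (fun θ hθ => ((hderiv θ hθ).2).hasDerivWithinAt) hbound h0m h1m
  simp only [Real.norm_eq_abs, sub_zero, abs_one, mul_one] at hmvt
  calc |F 1 - F 0| ≤ (C * 4 ^ p * Kp) * ((|Δw| + dt) * ((1 + t⁻¹) * B)) := hmvt
    _ = C * 4 ^ p * Kp * (|Δw| + dt) * (1 + t⁻¹) * B := by ring


/-- Smoothness of Gaussian-smoothed functions: fix `p ≥ 1` and `C > 0`.  There is a constant
`R > 0` depending only on `p` and `C` such that for every `m`, every measurable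
`ψ : ℝ^m → ℝ` with `|ψ(x)| ≤ C ∑ᵢ |xᵢ|^p + C`, every `a ∈ ℝ^{m-1}`, and
`Ψ(w; τ²) = E_{z∼N(0,1)}[ψ(a, w + τz)]`, one has for all `w, Δw`, `τ² > 0`, `Δτ² ≥ 0`:
`|Ψ(w+Δw; τ²+Δτ²) − Ψ(w; τ²)| ≤ R (|Δw| + Δτ²)(1 + τ⁻²)(S + |w|^p + |Δw|^p + τ^p + (Δτ²)^{p/2})`
where `S = 1 + ∑ᵢ |aᵢ|^p`.  (The dimension is written `m + 1` so that `m ≥ 1`.) -/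
theorem PsiAlphaSmoothnessBound (p : ℕ) (hp : 1 ≤ p) (C : ℝ) (hC : 0 < C) :
    ∃ R : ℝ, 0 < R ∧
      ∀ (m : ℕ) (ψ : (Fin (m + 1) → ℝ) → ℝ), Measurable ψ →
      (∀ x, |ψ x| ≤ C * ∑ i, |x i| ^ p + C) →
      ∀ (a : Fin m → ℝ) (w Δw t dt : ℝ), 0 < t → 0 ≤ dt →
        |(∫ z, ψ (Fin.snoc a (w + Δw + Real.sqrt (t + dt) * z)) ∂gaussianReal 0 1) -
            (∫ z, ψ (Fin.snoc a (w + Real.sqrt t * z)) ∂gaussianReal 0 1)| ≤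
          R * (|Δw| + dt) * (1 + t⁻¹) *
            ((1 + ∑ i, |a i| ^ p) + |w| ^ p + |Δw| ^ p +
              Real.sqrt t ^ p + Real.sqrt dt ^ p) := by
  refine ⟨C * 4 ^ p * (∫ z, (1 + |z| ^ p) * (1 + |z| + z ^ 2) ∂gaussianReal 0 1), ?_, ?_⟩
  · have hKint := qint p
    have h1 : (1:ℝ) ≤ ∫ z, (1 + |z| ^ p) * (1 + |z| + z ^ 2) ∂gaussianReal 0 1 := by
      have h0 : (1:ℝ) = ∫ _z, (1:ℝ) ∂gaussianReal 0 1 := by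
        simp
      calc (1:ℝ) = ∫ _z, (1:ℝ) ∂gaussianReal 0 1 := h0
        _ ≤ ∫ z, (1 + |z| ^ p) * (1 + |z| + z ^ 2) ∂gaussianReal 0 1 := by
          apply integral_mono (integrable_const 1) hKint
          intro z
          show (1:ℝ) ≤ (1 + |z| ^ p) * (1 + |z| + z ^ 2)
          have h0' : (0:ℝ) ≤ |z| := abs_nonneg z
          nlinarith [pow_nonneg (abs_nonneg z) p, sq_nonneg z]
    exact mul_pos (mul_pos hC (by positivity)) (by linarith)
  · intro m ψ hψ hb a w Δw t dt ht hdt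
    have hg : Measurable (fun y : ℝ => ψ (Fin.snoc a y)) := by
      have hsnoc : Continuous (fun y : ℝ => (Fin.snoc a y : Fin (m + 1) → ℝ)) := by
        apply continuous_pi
        intro i
        refine Fin.lastCases ?_ ?_ i
        · simp only [Fin.snoc_last]
          exact continuous_id
        · intro j
          simp only [Fin.snoc_castSucc]
          exact continuous_const
      exact hψ.comp hsnoc.measurable
    have hA : (1:ℝ) ≤ 1 + ∑ i, |a i| ^ p := by
      have h2 : (0:ℝ) ≤ ∑ i, |a i| ^ p := Finset.sum_nonneg fun i _ => by positivity
      linarith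
    have hgb : ∀ y : ℝ, |ψ (Fin.snoc a y)| ≤ C * ((1 + ∑ i, |a i| ^ p) + |y| ^ p) := by
      intro y
      have h1 := hb (Fin.snoc a y)
      have h2 : ∑ i : Fin (m + 1), |Fin.snoc a y i| ^ p
          = (∑ i : Fin m, |a i| ^ p) + |y| ^ p := by
        rw [Fin.sum_univ_castSucc]
        simp only [Fin.snoc_castSucc, Fin.snoc_last]
      rw [h2] at h1
      calc |ψ (Fin.snoc a y)| ≤ C * ((∑ i : Fin m, |a i| ^ p) + |y| ^ p) + C := h1
        _ = C * ((1 + ∑ i, |a i| ^ p) + |y| ^ p) := by ring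
    exact main_aux p C hC (fun y => ψ (Fin.snoc a y)) hg (1 + ∑ i, |a i| ^ p) hA hgb
      w Δw t dt ht hdt
end
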